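/- arXiv:1808.08394 — 7 statements merged into one kernel-verified Lean document; each statement's English description precedes it below -/
import Mathlib

section
/- Let H and α be entire functions such that H′ and α′ have no common zeros. Then there exists an at most countable set E ⊂ ℂ with the following property: for every a ∈ ℂ \ E, every c ∈ ℂ, and every pair of points z, w ∈ ℂ satisfying H(z) + a·α(z) = c, H′(z) + a·α′(z) = 0, H(w) + a·α(w) = c, and H′(w) + a·α′(w) = 0, one has α(z) = α(w). -/
open Filter Topology Set

/-- If `g` is locally constant on `S` (in the nhdsWithin sense) and the space is second
countable, then `g '' S` is countable. -/
lemma countable_image_of_locally_const {X Y : Type*} [TopologicalSpace X]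
    [SecondCountableTopology X] {S : Set X} {g : X → Y}
    (h : ∀ s ∈ S, ∀ᶠ x in 𝓝[S] s, g x = g s) : (g '' S).Countable := by
  obtain ⟨t, htS, htc, hcov⟩ := TopologicalSpace.countable_cover_nhdsWithin
    (f := fun s => {x | g x = g s}) (fun s hs => h s hs)
  have hsub : g '' S ⊆ ⋃ s ∈ t, {g s} := by
    rintro _ ⟨x, hx, rfl⟩
    obtain ⟨s, hst, hxs⟩ := mem_iUnion₂.1 (hcov hx)
    exact mem_iUnion₂.2 ⟨s, hst, hxs⟩
  exact Countable.mono hsub (htc.biUnion fun _ _ => countable_singleton _)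

/-- Let H and α be entire functions such that H′ and α′ have no
common zeros. Then there exists an at most countable set E ⊂ ℂ such that for
every a ∉ E, every c ∈ ℂ, and every pair of critical points z, w of
H_a = H + a·α lying on the level set H_a = c, one has α(z) = α(w). -/
theorem stmt0 (H α : ℂ → ℂ)
    (hH : Differentiable ℂ H) (hα : Differentiable ℂ α)
    (hno : ∀ z : ℂ, ¬(deriv H z = 0 ∧ deriv α z = 0)) :
    ∃ E : Set ℂ, E.Countable ∧
      ∀ a : ℂ, a ∉ E → ∀ c : ℂ, ∀ z w : ℂ,
        H z + a * α z = c → deriv H z + a * deriv α z = 0 →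
        H w + a * α w = c → deriv H w + a * deriv α w = 0 →
        α z = α w := by
  classical
  set F : ℂ → ℂ := fun z => -deriv H z / deriv α z with hFdef
  set Λ : ℂ → ℂ := fun z => H z + F z * α z with hΛdef
  set U : Set ℂ := {z | deriv α z ≠ 0} with hUdef
  -- analyticity facts
  have hHan : AnalyticOnNhd ℂ H univ := by
    rw [Complex.analyticOnNhd_univ_iff_differentiable]; exact hH
  have hαan : AnalyticOnNhd ℂ α univ := by
    rw [Complex.analyticOnNhd_univ_iff_differentiable]; exact hα
  have hH'an : AnalyticOnNhd ℂ (deriv H) univ := hHan.deriv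
  have hα'an : AnalyticOnNhd ℂ (deriv α) univ := hαan.deriv
  have hα'diff : Differentiable ℂ (deriv α) := fun z => (hα'an z trivial).differentiableAt
  have hα'cont : Continuous (deriv α) := hα'diff.continuous
  have hUopen : IsOpen U := isOpen_ne.preimage hα'cont
  have hFan : ∀ z ∈ U, AnalyticAt ℂ F z := fun z hz =>
    ((hH'an z trivial).neg).div (hα'an z trivial) hz
  have hFd : ∀ z ∈ U, DifferentiableAt ℂ F z := fun z hz => (hFan z hz).differentiableAt
  have hF'an : ∀ z ∈ U, AnalyticAt ℂ (deriv F) z :=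
    fun z hz => (AnalyticOnNhd.deriv (fun x hx => hFan x hx) : AnalyticOnNhd ℂ (deriv F) U) z hz
  -- Λ' = α * F' on U
  have hΛd : ∀ z ∈ U, HasDerivAt Λ (α z * deriv F z) z := by
    intro z hz
    have h1 : HasDerivAt F (deriv F z) z := (hFd z hz).hasDerivAt
    have h2 : HasDerivAt Λ (deriv H z + (deriv F z * α z + F z * deriv α z)) z :=
      (hH z).hasDerivAt.add (h1.mul (hα z).hasDerivAt)
    have h3 : F z * deriv α z = -deriv H z := by
      show -deriv H z / deriv α z * deriv α z = -deriv H z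
      exact div_mul_cancel₀ _ hz
    convert h2 using 1
    rw [h3]; ring
  -- key: a critical point z for parameter a lies in U and F z = a
  have hkey : ∀ (a : ℂ) (z : ℂ), deriv H z + a * deriv α z = 0 → z ∈ U ∧ F z = a := by
    intro a z hz
    have hzU : z ∈ U := by
      intro h0
      exact hno z ⟨by simpa [h0] using hz, h0⟩
    refine ⟨hzU, ?_⟩
    have : deriv H z = -(a * deriv α z) := by linear_combination hz
    show -deriv H z / deriv α z = a
    rw [this, neg_neg, mul_div_assoc, div_self hzU, mul_one]
  -- the two bad sets
  set Z : Set ℂ := {z | z ∈ U ∧ deriv F z = 0} with hZdef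
  set Bad : Set (ℂ × ℂ) := {p | p.1 ∈ U ∧ p.2 ∈ U ∧ deriv F p.1 ≠ 0 ∧ deriv F p.2 ≠ 0 ∧
    F p.1 = F p.2 ∧ Λ p.1 = Λ p.2 ∧ α p.1 ≠ α p.2} with hBaddef
  -- countability of F '' Z
  have hZc : (F '' Z).Countable := by
    apply countable_image_of_locally_const
    rintro z₀ ⟨hz₀U, hz₀Z⟩
    rcases (hF'an z₀ hz₀U).eventually_eq_zero_or_eventually_ne_zero with h | h
    · -- F' vanishes near z₀ : F locally constant
      have hUmem : ∀ᶠ x in 𝓝 z₀, x ∈ U := hUopen.mem_nhds hz₀U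
      obtain ⟨r, hr, hball⟩ := Metric.eventually_nhds_iff_ball.1 (h.and hUmem)
      have hconst : ∀ x ∈ Metric.ball z₀ r, F x = F z₀ := by
        intro x hx
        refine (convex_ball z₀ r).is_const_of_fderivWithin_eq_zero
          (fun y hy => ((hFd y (hball y hy).2).differentiableWithinAt)) ?_ hx
          (Metric.mem_ball_self hr)
        intro y hy
        rw [fderivWithin_of_isOpen Metric.isOpen_ball hy]
        have hder : deriv F y = 0 := (hball y hy).1
        rw [← toSpanSingleton_deriv, hder]
        ext1; simp
      have : ∀ᶠ x in 𝓝 z₀, F x = F z₀ :=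
        eventually_of_mem (Metric.ball_mem_nhds z₀ hr) hconst
      exact this.filter_mono nhdsWithin_le_nhds
    · -- z₀ is an isolated zero of F'
      have h' : ∀ᶠ x in 𝓝 z₀, x ≠ z₀ → deriv F x ≠ 0 := by
        have := eventually_nhdsWithin_iff.1 h
        filter_upwards [this] with x hx hxne
        exact hx hxne
      filter_upwards [h'.filter_mono nhdsWithin_le_nhds, eventually_mem_nhdsWithin]
        with x hx hxZ
      by_cases hxz : x = z₀
      · rw [hxz]
      · exact absurd hxZ.2 (hx hxz)
  -- countability of the image of Bad
  have hBc : ((fun p : ℂ × ℂ => F p.1) '' Bad).Countable := by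
    apply countable_image_of_locally_const
    rintro ⟨z₀, w₀⟩ ⟨hz₀U, hw₀U, hdz, hdw, hFe, hΛe, hαne⟩
    -- strict derivatives
    have hsz : HasStrictDerivAt F (deriv F z₀) z₀ := by
      have := (hFan z₀ hz₀U).hasStrictFDerivAt.hasStrictDerivAt
      rwa [fderiv_apply_one_eq_deriv] at this
    have hsw : HasStrictDerivAt F (deriv F w₀) w₀ := by
      have := (hFan w₀ hw₀U).hasStrictFDerivAt.hasStrictDerivAt
      rwa [fderiv_apply_one_eq_deriv] at this
    set ζ : ℂ → ℂ := hsz.localInverse F _ z₀ hdz with hζdef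
    set ω : ℂ → ℂ := hsw.localInverse F _ w₀ hdw with hωdef
    have hleftz : ∀ᶠ x in 𝓝 z₀, ζ (F x) = x :=
      (hsz.hasStrictFDerivAt_equiv hdz).eventually_left_inverse
    have hleftw : ∀ᶠ x in 𝓝 w₀, ω (F x) = x :=
      (hsw.hasStrictFDerivAt_equiv hdw).eventually_left_inverse
    have hζz₀ : ζ (F z₀) = z₀ := hleftz.self_of_nhds
    have hωw₀ : ω (F w₀) = w₀ := hleftw.self_of_nhds
    have hζd : HasDerivAt ζ (deriv F z₀)⁻¹ (F z₀) := (hsz.to_localInverse hdz).hasDerivAt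
    have hωd : HasDerivAt ω (deriv F w₀)⁻¹ (F w₀) := (hsw.to_localInverse hdw).hasDerivAt
    -- the two branches of critical values
    set φ : ℂ → ℂ := Λ ∘ ζ with hφdef
    set ψ : ℂ → ℂ := Λ ∘ ω with hψdef
    have hφd : HasDerivAt φ (α z₀) (F z₀) := by
      have h1 : HasDerivAt Λ (α z₀ * deriv F z₀) (ζ (F z₀)) := by rw [hζz₀]; exact hΛd z₀ hz₀U
      have := h1.comp (F z₀) hζd
      simpa [mul_assoc, mul_inv_cancel₀ hdz] using this
    have hψd : HasDerivAt ψ (α w₀) (F z₀) := by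
      have h1 : HasDerivAt Λ (α w₀ * deriv F w₀) (ω (F w₀)) := by rw [hωw₀]; exact hΛd w₀ hw₀U
      have := h1.comp (F w₀) hωd
      rw [hFe]
      simpa [mul_assoc, mul_inv_cancel₀ hdw] using this
    set h : ℂ → ℂ := fun a => φ a - ψ a with hhdef
    have hhd : HasDerivAt h (α z₀ - α w₀) (F z₀) := hφd.sub hψd
    have hh0 : h (F z₀) = 0 := by
      show φ (F z₀) - ψ (F z₀) = 0
      have h1 : φ (F z₀) = Λ z₀ := by show Λ (ζ (F z₀)) = Λ z₀; rw [hζz₀]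
      have h2 : ψ (F z₀) = Λ w₀ := by show Λ (ω (F z₀)) = Λ w₀; rw [hFe, hωw₀]
      rw [h1, h2, hΛe, sub_self]
    -- isolated zero of h at F z₀
    have hiso : ∀ᶠ a in 𝓝[≠] (F z₀), h a ≠ 0 := by
      have hslope := hasDerivAt_iff_tendsto_slope.1 hhd
      have hne0 : α z₀ - α w₀ ≠ 0 := sub_ne_zero.2 hαne
      have hsne : ∀ᶠ a in 𝓝[≠] (F z₀), slope h (F z₀) a ≠ 0 := hslope.eventually_ne hne0
      filter_upwards [hsne, eventually_mem_nhdsWithin] with a ha hamem hcontra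
      apply ha
      rw [slope_def_field, hh0, hcontra, sub_zero, zero_div]
    have hiso' : ∀ᶠ a in 𝓝 (F z₀), a ≠ F z₀ → h a ≠ 0 := by
      have := eventually_nhdsWithin_iff.1 hiso
      filter_upwards [this] with a ha hane
      exact ha hane
    have hFcont : ContinuousAt F z₀ := (hFd z₀ hz₀U).continuousAt
    have hiso'' : ∀ᶠ x in 𝓝 z₀, F x ≠ F z₀ → h (F x) ≠ 0 := hFcont.eventually hiso'
    -- conclude local constancy
    have hev : ∀ᶠ p : ℂ × ℂ in 𝓝 (z₀, w₀),
        (ζ (F p.1) = p.1 ∧ (F p.1 ≠ F z₀ → h (F p.1) ≠ 0)) ∧ ω (F p.2) = p.2 :=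
      (hleftz.and hiso'').prod_nhds hleftw
    filter_upwards [hev.filter_mono nhdsWithin_le_nhds, eventually_mem_nhdsWithin]
      with p hp hpBad
    obtain ⟨⟨hζp, himp⟩, hωp⟩ := hp
    obtain ⟨_, _, _, _, hFe', hΛe', _⟩ := hpBad
    by_contra hne'
    apply himp hne'
    show φ (F p.1) - ψ (F p.1) = 0
    have h1 : φ (F p.1) = Λ p.1 := by show Λ (ζ (F p.1)) = Λ p.1; rw [hζp]
    have h2 : ψ (F p.1) = Λ p.2 := by show Λ (ω (F p.1)) = Λ p.2; rw [hFe', hωp]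
    rw [h1, h2, hΛe', sub_self]
  -- the exceptional set
  refine ⟨F '' Z ∪ (fun p : ℂ × ℂ => F p.1) '' Bad, hZc.union hBc, ?_⟩
  intro a ha c z w hz hz' hw hw'
  by_contra hne
  obtain ⟨hzU, hFz⟩ := hkey a z hz'
  obtain ⟨hwU, hFw⟩ := hkey a w hw'
  have hdz : deriv F z ≠ 0 := by
    intro h0
    exact ha (Or.inl ⟨z, ⟨hzU, h0⟩, hFz⟩)
  have hdw : deriv F w ≠ 0 := by
    intro h0
    exact ha (Or.inl ⟨w, ⟨hwU, h0⟩, hFw⟩)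
  have hΛz : Λ z = c := by
    show H z + F z * α z = c
    rw [hFz]; exact hz
  have hΛw : Λ w = c := by
    show H w + F w * α w = c
    rw [hFw]; exact hw
  have hmem : (z, w) ∈ Bad :=
    ⟨hzU, hwU, hdz, hdw, by rw [hFz, hFw], by rw [hΛz, hΛw], hne⟩
  exact ha (Or.inr ⟨(z, w), hmem, hFz⟩)
end

section
/- Let h be a transcendental entire function with h(1) ≠ 0 and h(−1) ≠ 0, and for a ∈ ℂ put H_a(z) := cos z · h(sin z) + a · sin z. Then there exists an at most countable set E ⊂ ℂ such that for every a ∈ ℂ \ E, every c ∈ ℂ, and any two solutions u, v of the simultaneous equations H_a(z) = c and H_a′(z) = 0, one has cos u = cos v and sin u = sin v. -/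
open Complex Set Topology Metric Filter

noncomputable section

/-- rational parametrization of the circle: x-coordinate -/
def auxX (s : ℂ) : ℂ := 2*s/(1+s^2)
/-- y-coordinate -/
def auxYc (s : ℂ) : ℂ := (1-s^2)/(1+s^2)
/-- the function g(x) = -x h(x) + (1-x²) h'(x) -/
def auxg (h : ℂ → ℂ) (x : ℂ) : ℂ := -x * h x + (1-x^2) * deriv h x
def auxG (h : ℂ → ℂ) (s : ℂ) : ℂ := auxg h (auxX s)
/-- the critical parameter a as a function of the critical point -/
def auxA (h : ℂ → ℂ) (s : ℂ) : ℂ := -auxG h s / auxYc s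
/-- the value function -/
def auxV (h : ℂ → ℂ) (a s : ℂ) : ℂ := auxYc s * h (auxX s) + a * auxX s
/-- discriminant-type function whose zeros are degenerate critical points -/
def auxD (h : ℂ → ℂ) (s : ℂ) : ℂ :=
  auxG h s * (-4*s) - deriv (auxg h) (auxX s) * (2*(1-s^2)) * auxYc s

lemma auxX_one : auxX 1 = 1 := by norm_num [auxX]
lemma auxYc_one : auxYc 1 = 0 := by norm_num [auxYc]
lemma auxD_one (h : ℂ → ℂ) : auxD h 1 = 4 * h 1 := by
  simp [auxD, auxX_one, auxYc_one, auxG, auxg]; ring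

lemma aux_inj {s t : ℂ} (hs : 1+s^2 ≠ 0) (ht : 1+t^2 ≠ 0)
    (hX : auxX s = auxX t) (hY : auxYc s = auxYc t) : s = t := by
  rw [auxX, auxX, div_eq_div_iff hs ht] at hX
  rw [auxYc, auxYc, div_eq_div_iff hs ht] at hY
  have h2 : s^2 = t^2 := by linear_combination -hY/2
  have h3 : 2*s*(1+s^2) = 2*t*(1+s^2) := by linear_combination hX + 2*s*h2
  have h4 : (2*s) * (1+s^2) = (2*t) * (1+s^2) := by linear_combination h3
  have h5 := mul_right_cancel₀ hs h4
  linear_combination h5/2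

lemma hasDerivAt_auxX {s : ℂ} (hs : 1+s^2 ≠ 0) :
    HasDerivAt auxX (2*(1-s^2)/(1+s^2)^2) s := by
  have h1 : HasDerivAt (fun s : ℂ => 2*s) 2 s := by
    simpa using (hasDerivAt_id s).const_mul (2:ℂ)
  have h2 : HasDerivAt (fun s : ℂ => 1+s^2) (2*s) s := by
    simpa using ((hasDerivAt_pow 2 s).const_add (1:ℂ))
  have := h1.div h2 hs
  refine this.congr_deriv ?_
  field_simp
  ring

lemma hasDerivAt_auxYc {s : ℂ} (hs : 1+s^2 ≠ 0) :
    HasDerivAt auxYc (-4*s/(1+s^2)^2) s := by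
  have h1 : HasDerivAt (fun s : ℂ => 1-s^2) (-(2*s)) s := by
    simpa using ((hasDerivAt_pow 2 s).const_sub (1:ℂ))
  have h2 : HasDerivAt (fun s : ℂ => 1+s^2) (2*s) s := by
    simpa using ((hasDerivAt_pow 2 s).const_add (1:ℂ))
  have := h1.div h2 hs
  refine this.congr_deriv ?_
  field_simp
  ring

section withh
variable {h : ℂ → ℂ} (hd : Differentiable ℂ h)

include hd

lemma aux_deriv_h_anal : ∀ x : ℂ, AnalyticAt ℂ (deriv h) x := by
  have hA : AnalyticOnNhd ℂ h univ := fun x _ => hd.analyticAt x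
  intro x
  exact hA.deriv x (mem_univ x)

lemma aux_deriv_h_diff : Differentiable ℂ (deriv h) := by
  intro x
  exact (aux_deriv_h_anal hd x).differentiableAt

lemma auxg_diff : Differentiable ℂ (auxg h) := by
  have h1 := aux_deriv_h_diff hd
  exact (differentiable_id.neg.mul hd).add
    ((differentiable_const _|>.sub (differentiable_pow 2)).mul h1)

lemma auxg_anal : ∀ x : ℂ, AnalyticAt ℂ (auxg h) x := by
  intro x
  exact (auxg_diff hd).analyticAt x

lemma aux_deriv_auxg_anal : ∀ x : ℂ, AnalyticAt ℂ (deriv (auxg h)) x :=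
  aux_deriv_h_anal (auxg_diff hd)

end withh

lemma analyticAt_auxX {s : ℂ} (hs : 1+s^2 ≠ 0) : AnalyticAt ℂ auxX s := by
  apply AnalyticAt.div
  · exact (analyticAt_const.mul (analyticAt_id ..))
  · exact (analyticAt_const.add ((analyticAt_id ..).pow 2))
  · exact hs

lemma analyticAt_auxYc {s : ℂ} (hs : 1+s^2 ≠ 0) : AnalyticAt ℂ auxYc s := by
  apply AnalyticAt.div
  · exact (analyticAt_const.sub ((analyticAt_id ..).pow 2))
  · exact (analyticAt_const.add ((analyticAt_id ..).pow 2))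
  · exact hs

section withh2
variable {h : ℂ → ℂ} (hd : Differentiable ℂ h)
include hd

lemma analyticAt_auxG {s : ℂ} (hs : 1+s^2 ≠ 0) : AnalyticAt ℂ (auxG h) s :=
  (auxg_anal hd (auxX s)).comp (analyticAt_auxX hs)

lemma analyticAt_auxD {s : ℂ} (hs : 1+s^2 ≠ 0) : AnalyticAt ℂ (auxD h) s := by
  apply AnalyticAt.sub
  · exact (analyticAt_auxG hd hs).mul (analyticAt_const.mul (analyticAt_id ..))
  · exact (((aux_deriv_auxg_anal hd (auxX s)).comp (analyticAt_auxX hs)).mul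
      (analyticAt_const.mul (analyticAt_const.sub ((analyticAt_id ..).pow 2)))).mul
      (analyticAt_auxYc hs)

lemma analyticAt_auxA {s : ℂ} (hs : 1+s^2 ≠ 0) (hY : auxYc s ≠ 0) :
    AnalyticAt ℂ (auxA h) s :=
  ((analyticAt_auxG hd hs).neg).div (analyticAt_auxYc hs) hY

lemma hasDerivAt_auxG {s : ℂ} (hs : 1+s^2 ≠ 0) :
    HasDerivAt (auxG h) (deriv (auxg h) (auxX s) * (2*(1-s^2)/(1+s^2)^2)) s :=
  (((auxg_diff hd) (auxX s)).hasDerivAt).comp s (hasDerivAt_auxX hs)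

lemma hasDerivAt_auxA {s : ℂ} (hs : 1+s^2 ≠ 0) (hY : auxYc s ≠ 0) :
    HasDerivAt (auxA h) (auxD h s / ((1+s^2)^2 * (auxYc s)^2)) s := by
  have hG := hasDerivAt_auxG hd hs
  have hYd := hasDerivAt_auxYc hs
  have := (hG.neg).div hYd hY
  refine this.congr_deriv ?_
  rw [auxD, Pi.neg_apply]
  field_simp
  ring

lemma hasStrictDerivAt_auxA {s : ℂ} (hs : 1+s^2 ≠ 0) (hY : auxYc s ≠ 0) :
    HasStrictDerivAt (auxA h) (auxD h s / ((1+s^2)^2 * (auxYc s)^2)) s := by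
  have h1 : HasStrictDerivAt (auxA h) (deriv (auxA h) s) s := by
    have h2 := (analyticAt_auxA hd hs hY).hasStrictFDerivAt
    exact h2.hasStrictDerivAt
  rwa [(hasDerivAt_auxA hd hs hY).deriv] at h1

end withh2

lemma aux_key_identity (h : ℂ → ℂ) {a s : ℂ} (hq : 1+s^2 ≠ 0) :
    (-4*s/(1+s^2)^2) * h (auxX s) +
      auxYc s * (deriv h (auxX s) * (2*(1-s^2)/(1+s^2)^2)) +
      a * (2*(1-s^2)/(1+s^2)^2) = 2/(1+s^2)*(auxG h s + a*auxYc s) := by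
  have hq2 : (1+s^2)^2 ≠ 0 := pow_ne_zero _ hq
  rw [auxG, auxg, auxYc]
  set H := h (auxX s) with hH
  set D := deriv h (auxX s) with hD
  rw [auxX]
  field_simp
  ring

section withh3
variable {h : ℂ → ℂ} (hd : Differentiable ℂ h)
include hd

/-- The envelope lemma: along a family of critical points `α a` for parameter `a`,
the derivative of the critical value with respect to `a` is `auxX (α a)`. -/
lemma hasDerivAt_envelope {α : ℂ → ℂ} {a α' : ℂ}
    (hα : HasDerivAt α α' a) (hs : 1+(α a)^2 ≠ 0) (hY : auxYc (α a) ≠ 0)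
    (hcrit : auxA h (α a) = a) :
    HasDerivAt (fun x => auxV h x (α x)) (auxX (α a)) a := by
  set s := α a with hsdef
  have hGY : auxG h s + a * auxYc s = 0 := by
    rw [auxA, div_eq_iff hY] at hcrit
    linear_combination -hcrit
  have hP : HasDerivAt (fun s => auxYc s * h (auxX s))
      ((-4*s/(1+s^2)^2) * h (auxX s) +
        auxYc s * (deriv h (auxX s) * (2*(1-s^2)/(1+s^2)^2))) s :=
    (hasDerivAt_auxYc hs).mul (((hd (auxX s)).hasDerivAt).comp s (hasDerivAt_auxX hs))
  have h1 : HasDerivAt (fun x => auxYc (α x) * h (auxX (α x)))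
      (((-4*s/(1+s^2)^2) * h (auxX s) +
        auxYc s * (deriv h (auxX s) * (2*(1-s^2)/(1+s^2)^2))) * α') a := hP.comp a hα
  have h2 : HasDerivAt (fun x => auxX (α x)) (2*(1-s^2)/(1+s^2)^2 * α') a :=
    (hasDerivAt_auxX hs).comp a hα
  have h3 := (hasDerivAt_id a).mul h2
  have h4 := h1.add h3
  have key := aux_key_identity h (a := a) hs
  rw [hGY, mul_zero] at key
  have h5 : HasDerivAt (fun x => auxV h x (α x))
      (((-4*s/(1+s^2)^2) * h (auxX s) +
        auxYc s * (deriv h (auxX s) * (2*(1-s^2)/(1+s^2)^2))) * α' +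
        (1 * auxX (α a) + a * (2*(1-s^2)/(1+s^2)^2 * α'))) a := h4
  convert h5 using 1
  linear_combination (-α') * key

end withh3

lemma aux_countable_of_isolated {X : Type*} [TopologicalSpace X]
    [SecondCountableTopology X] {S : Set X}
    (hiso : ∀ z ∈ S, ∃ V : Set X, IsOpen V ∧ z ∈ V ∧ V ∩ S ⊆ {z}) : S.Countable := by
  obtain ⟨b, hbc, -, hb⟩ := TopologicalSpace.exists_countable_basis X
  choose V hVo hVm hVs using hiso
  have hpick : ∀ z (hz : z ∈ S), ∃ W ∈ b, z ∈ W ∧ W ⊆ V z hz :=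
    fun z hz => hb.exists_subset_of_mem_open (hVm z hz) (hVo z hz)
  choose W hWb hWm hWs using hpick
  have key : ∀ z hz w hw, W z hz = W w hw → z = w := by
    intro z hz w hw he
    have : w ∈ V z hz := hWs z hz (he ▸ hWm w hw)
    have : w ∈ ({z} : Set X) := hVs z hz ⟨this, hw⟩
    exact this.symm
  -- build an injection from S into b
  have : S ⊆ ⋃ (p : {W' : Set X // W' ∈ b}),
      {z | ∃ hz : z ∈ S, W z hz = p.1} := by
    intro z hz
    exact Set.mem_iUnion.2 ⟨⟨W z hz, hWb z hz⟩, hz, rfl⟩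
  refine Set.Countable.mono this ?_
  have : Countable {W' : Set X // W' ∈ b} := hbc.to_subtype
  refine Set.countable_iUnion fun p => ?_
  rcases Set.eq_empty_or_nonempty {z | ∃ hz : z ∈ S, W z hz = p.1} with he | ⟨z0, hz0⟩
  · simp [he]
  · obtain ⟨hz0S, hz0e⟩ := hz0
    refine Set.Countable.mono ?_ (Set.countable_singleton z0)
    rintro w ⟨hwS, hwe⟩
    exact key w hwS z0 hz0S (hwe.trans hz0e.symm)

lemma aux_countable_zeros {f : ℂ → ℂ} {U : Set ℂ} (hU : IsOpen U)
    (hUc : IsPreconnected U) (hf : AnalyticOnNhd ℂ f U) {z₀ : ℂ} (hz₀ : z₀ ∈ U)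
    (hnz : f z₀ ≠ 0) : {z | z ∈ U ∧ f z = 0}.Countable := by
  apply aux_countable_of_isolated
  rintro z ⟨hzU, hz0⟩
  rcases (hf z hzU).eventually_eq_zero_or_eventually_ne_zero with hev | hev
  · exfalso
    exact hnz (hf.eqOn_zero_of_preconnected_of_eventuallyEq_zero hUc hzU hev hz₀)
  · have : ∀ᶠ w in 𝓝[≠] z, f w ≠ 0 := hev
    rw [eventually_nhdsWithin_iff] at this
    obtain ⟨V, hV, hVo, hVz⟩ := _root_.eventually_nhds_iff.mp this
    refine ⟨V, hVo, hVz, ?_⟩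
    rintro w ⟨hwV, -, hw0⟩
    by_contra hne
    exact hV w hwV (by simpa using hne) hw0

lemma aux_omega_preconnected : IsPreconnected {s : ℂ | 1+s^2 ≠ 0} := by
  have hiff : ∀ s : ℂ, 1+s^2 = 0 ↔ (s = Complex.I ∨ s = -Complex.I) := by
    intro s
    constructor
    · intro hcon
      have hfac : (s - Complex.I) * (s + Complex.I) = 0 := by
        have hI : Complex.I^2 = -1 := Complex.I_sq
        linear_combination hcon - hI
      rcases mul_eq_zero.mp hfac with hh | hh
      · exact Or.inl (by linear_combination hh)
      · exact Or.inr (by linear_combination hh)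
    · rintro (rfl | rfl)
      · linear_combination Complex.I_sq
      · linear_combination Complex.I_sq
  have he : {s : ℂ | 1+s^2 ≠ 0} = ({Complex.I, -Complex.I} : Set ℂ)ᶜ := by
    ext s
    simp only [Set.mem_setOf_eq, Set.mem_compl_iff, Set.mem_insert_iff,
      Set.mem_singleton_iff]
    exact not_congr (hiff s)
  rw [he]
  have hcnt : ({Complex.I, -Complex.I} : Set ℂ).Countable :=
    (Set.countable_singleton _).insert _
  have hrank : 1 < Module.rank ℝ ℂ := by
    rw [Complex.rank_real_complex]
    norm_num
  exact (hcnt.isPathConnected_compl_of_one_lt_rank hrank).isConnected.isPreconnected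

/-- The set of pairs of distinct "bad" critical points sharing parameter and value. -/
def auxW (h : ℂ → ℂ) (E₀ : Set ℂ) : Set (ℂ × ℂ) :=
  {p | 1+p.1^2 ≠ 0 ∧ 1+p.2^2 ≠ 0 ∧ auxYc p.1 ≠ 0 ∧ auxYc p.2 ≠ 0 ∧ p.1 ≠ p.2 ∧
    auxA h p.1 = auxA h p.2 ∧ auxV h (auxA h p.1) p.1 = auxV h (auxA h p.1) p.2 ∧
    auxA h p.1 ∉ E₀}

section local_sec
variable {h : ℂ → ℂ} (hd : Differentiable ℂ h)
include hd

lemma aux_N_open : IsOpen {s : ℂ | 1+s^2 ≠ 0 ∧ auxYc s ≠ 0 ∧ auxD h s ≠ 0} := by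
  rw [isOpen_iff_mem_nhds]
  rintro s ⟨hq, hY, hD⟩
  have h1 : ∀ᶠ w in 𝓝 s, 1+w^2 ≠ 0 :=
    ((continuous_const.add (continuous_pow 2)).continuousAt).eventually_ne hq
  have h2 : ∀ᶠ w in 𝓝 s, auxYc w ≠ 0 :=
    ((analyticAt_auxYc hq).continuousAt).eventually_ne hY
  have h3 : ∀ᶠ w in 𝓝 s, auxD h w ≠ 0 :=
    ((analyticAt_auxD hd hq).continuousAt).eventually_ne hD
  filter_upwards [h1, h2, h3] with w hw1 hw2 hw3
  exact ⟨hw1, hw2, hw3⟩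

lemma aux_local {E₀ : Set ℂ} (h0 : (0:ℂ) ∈ E₀)
    (hdeg : ∀ s : ℂ, 1+s^2 ≠ 0 → auxYc s ≠ 0 → auxD h s = 0 → auxA h s ∈ E₀)
    {p : ℂ × ℂ} (hp : p ∈ auxW h E₀) :
    ∃ U : Set (ℂ × ℂ), IsOpen U ∧ p ∈ U ∧
      ((fun q : ℂ × ℂ => auxA h q.1) '' (auxW h E₀ ∩ U)).Countable := by
  obtain ⟨t₁, t₂⟩ := p
  obtain ⟨hq1, hq2, hY1, hY2, htne, hAeq, hVeq, hnE⟩ := hp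
  dsimp only at hq1 hq2 hY1 hY2 htne hAeq hVeq hnE
  set N : Set ℂ := {s : ℂ | 1+s^2 ≠ 0 ∧ auxYc s ≠ 0 ∧ auxD h s ≠ 0} with hN
  have hNopen : IsOpen N := aux_N_open hd
  set a₀ : ℂ := auxA h t₁ with ha₀
  have ha₀ne : a₀ ≠ 0 := fun he => hnE (by rw [he]; exact h0)
  have hD1 : auxD h t₁ ≠ 0 := fun hz => hnE (hdeg t₁ hq1 hY1 hz)
  have hD2 : auxD h t₂ ≠ 0 := fun hz => hnE (by rw [hAeq]; exact hdeg t₂ hq2 hY2 hz)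
  have ht₁N : t₁ ∈ N := ⟨hq1, hY1, hD1⟩
  have ht₂N : t₂ ∈ N := ⟨hq2, hY2, hD2⟩
  -- derivative of auxA is nonzero at t₁, t₂
  have hdval : ∀ s : ℂ, s ∈ N → auxD h s / ((1+s^2)^2 * (auxYc s)^2) ≠ 0 := by
    rintro s ⟨hq, hY, hD⟩
    exact div_ne_zero hD (mul_ne_zero (pow_ne_zero _ hq) (pow_ne_zero _ hY))
  -- local homeomorphisms at t₁ and t₂
  have hs₁ := hasStrictDerivAt_auxA hd hq1 hY1
  have hs₂ := hasStrictDerivAt_auxA hd hq2 hY2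
  set F₁ := (hs₁.hasStrictFDerivAt_equiv (hdval t₁ ht₁N)).toOpenPartialHomeomorph (auxA h) with hF₁
  set F₂ := (hs₂.hasStrictFDerivAt_equiv (hdval t₂ ht₂N)).toOpenPartialHomeomorph (auxA h) with hF₂
  have hcoe1 : ⇑F₁ = auxA h :=
    (hs₁.hasStrictFDerivAt_equiv (hdval t₁ ht₁N)).toOpenPartialHomeomorph_coe
  have hcoe2 : ⇑F₂ = auxA h :=
    (hs₂.hasStrictFDerivAt_equiv (hdval t₂ ht₂N)).toOpenPartialHomeomorph_coe
  have ht₁src : t₁ ∈ F₁.source :=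
    (hs₁.hasStrictFDerivAt_equiv (hdval t₁ ht₁N)).mem_toOpenPartialHomeomorph_source
  have ht₂src : t₂ ∈ F₂.source :=
    (hs₂.hasStrictFDerivAt_equiv (hdval t₂ ht₂N)).mem_toOpenPartialHomeomorph_source
  have ha₀tgt1 : a₀ ∈ F₁.target := by
    have := F₁.map_source ht₁src
    rwa [hcoe1] at this
  have ha₀tgt2 : a₀ ∈ F₂.target := by
    have := F₂.map_source ht₂src
    rwa [hcoe2, ← hAeq] at this
  have hsymm1a₀ : F₁.symm a₀ = t₁ := by
    have := F₁.left_inv ht₁src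
    rwa [hcoe1] at this
  have hsymm2a₀ : F₂.symm a₀ = t₂ := by
    have := F₂.left_inv ht₂src
    rwa [hcoe2, ← hAeq] at this
  -- choose a ball around a₀
  have hmemT : (F₁.target ∩ F₂.target ∩ F₁.symm ⁻¹' N ∩ F₂.symm ⁻¹' N) ∈ 𝓝 a₀ := by
    refine Filter.inter_mem (Filter.inter_mem (Filter.inter_mem ?_ ?_) ?_) ?_
    · exact F₁.open_target.mem_nhds ha₀tgt1
    · exact F₂.open_target.mem_nhds ha₀tgt2
    · refine (F₁.continuousAt_symm ha₀tgt1).preimage_mem_nhds ?_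
      rw [hsymm1a₀]
      exact hNopen.mem_nhds ht₁N
    · refine (F₂.continuousAt_symm ha₀tgt2).preimage_mem_nhds ?_
      rw [hsymm2a₀]
      exact hNopen.mem_nhds ht₂N
  obtain ⟨r, hr0, hball⟩ := Metric.mem_nhds_iff.mp hmemT
  set B := Metric.ball a₀ r with hB
  -- for every a in B, the two branches of critical points
  have hbranch : ∀ a ∈ B,
      (F₁.symm a ∈ N ∧ auxA h (F₁.symm a) = a ∧
        HasDerivAt (fun x => auxV h x (F₁.symm x)) (auxX (F₁.symm a)) a) ∧
      (F₂.symm a ∈ N ∧ auxA h (F₂.symm a) = a ∧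
        HasDerivAt (fun x => auxV h x (F₂.symm x)) (auxX (F₂.symm a)) a) := by
    intro a haB
    have haT := hball haB
    obtain ⟨⟨⟨ht1, ht2⟩, hn1⟩, hn2⟩ := haT
    have hA1 : auxA h (F₁.symm a) = a := by
      have := F₁.right_inv ht1
      rwa [hcoe1] at this
    have hA2 : auxA h (F₂.symm a) = a := by
      have := F₂.right_inv ht2
      rwa [hcoe2] at this
    obtain ⟨hqa1, hYa1, hDa1⟩ := hn1
    obtain ⟨hqa2, hYa2, hDa2⟩ := hn2
    -- derivative of the inverse branch
    have hev1 : ∀ᶠ y in 𝓝 a, auxA h (F₁.symm y) = y := by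
      filter_upwards [isOpen_ball.mem_nhds haB] with y hy
      have := F₁.right_inv (hball hy).1.1.1
      rwa [hcoe1] at this
    have hev2 : ∀ᶠ y in 𝓝 a, auxA h (F₂.symm y) = y := by
      filter_upwards [isOpen_ball.mem_nhds haB] with y hy
      have := F₂.right_inv (hball hy).1.1.2
      rwa [hcoe2] at this
    have hc1 : ContinuousAt F₁.symm a := F₁.continuousAt_symm ht1
    have hc2 : ContinuousAt F₂.symm a := F₂.continuousAt_symm ht2
    have hder1 : HasDerivAt F₁.symm
        (auxD h (F₁.symm a) / ((1+(F₁.symm a)^2)^2 * (auxYc (F₁.symm a))^2))⁻¹ a :=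
      HasDerivAt.of_local_left_inverse hc1 (hasDerivAt_auxA hd hqa1 hYa1)
        (hdval _ ⟨hqa1, hYa1, hDa1⟩) hev1
    have hder2 : HasDerivAt F₂.symm
        (auxD h (F₂.symm a) / ((1+(F₂.symm a)^2)^2 * (auxYc (F₂.symm a))^2))⁻¹ a :=
      HasDerivAt.of_local_left_inverse hc2 (hasDerivAt_auxA hd hqa2 hYa2)
        (hdval _ ⟨hqa2, hYa2, hDa2⟩) hev2
    exact ⟨⟨⟨hqa1, hYa1, hDa1⟩, hA1, hasDerivAt_envelope hd hder1 hqa1 hYa1 hA1⟩,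
      ⟨⟨hqa2, hYa2, hDa2⟩, hA2, hasDerivAt_envelope hd hder2 hqa2 hYa2 hA2⟩⟩
  set E₃ : ℂ → ℂ := fun x => auxV h x (F₁.symm x) - auxV h x (F₂.symm x) with hE₃
  have hE₃d : ∀ a ∈ B, HasDerivAt E₃ (auxX (F₁.symm a) - auxX (F₂.symm a)) a := by
    intro a haB
    obtain ⟨⟨-, -, hd1⟩, ⟨-, -, hd2⟩⟩ := hbranch a haB
    exact hd1.sub hd2
  by_cases hcase : ∀ a ∈ B, E₃ a = 0
  · -- impossible: envelope argument forces t₁ = t₂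
    exfalso
    have hz : HasDerivAt E₃ 0 a₀ := by
      have hevz : E₃ =ᶠ[𝓝 a₀] fun _ => (0:ℂ) := by
        filter_upwards [isOpen_ball.mem_nhds (Metric.mem_ball_self hr0)] with y hy
        exact hcase y hy
      exact (hasDerivAt_const a₀ (0:ℂ)).congr_of_eventuallyEq hevz
    have huniq := (hE₃d a₀ (Metric.mem_ball_self hr0)).unique hz
    rw [hsymm1a₀, hsymm2a₀, sub_eq_zero] at huniq
    -- huniq : auxX t₁ = auxX t₂
    have hGeq : auxG h t₁ = auxG h t₂ := by rw [auxG, auxG, huniq]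
    have hA1' : -auxG h t₁ = a₀ * auxYc t₁ := by
      have : auxA h t₁ = a₀ := rfl
      rwa [auxA, div_eq_iff hY1] at this
    have hA2' : -auxG h t₂ = a₀ * auxYc t₂ := by
      have : auxA h t₂ = a₀ := hAeq.symm
      rwa [auxA, div_eq_iff hY2] at this
    have hYeq : auxYc t₁ = auxYc t₂ := by
      apply mul_left_cancel₀ ha₀ne
      rw [← hA1', ← hA2', hGeq]
    exact htne (aux_inj hq1 hq2 huniq hYeq)
  · push_neg at hcase
    obtain ⟨a₁, ha₁B, ha₁ne⟩ := hcase
    have hE₃anal : AnalyticOnNhd ℂ E₃ B := by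
      apply DifferentiableOn.analyticOnNhd (s := B) ?_ isOpen_ball
      intro a haB
      exact ((hE₃d a haB).differentiableAt).differentiableWithinAt
    have hzeros : {z | z ∈ B ∧ E₃ z = 0}.Countable :=
      aux_countable_zeros isOpen_ball (convex_ball a₀ r).isPreconnected hE₃anal ha₁B ha₁ne
    -- the open neighborhood of p
    have hAcontN : ContinuousOn (auxA h) N := by
      rintro s ⟨hq, hY, -⟩
      exact ((analyticAt_auxA hd hq hY).continuousAt).continuousWithinAt
    have hUopen : IsOpen (N ∩ auxA h ⁻¹' B) :=
      hAcontN.isOpen_inter_preimage hNopen isOpen_ball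
    set U₁ := F₁.source ∩ (N ∩ auxA h ⁻¹' B) with hU₁
    set U₂ := F₂.source ∩ (N ∩ auxA h ⁻¹' B) with hU₂
    refine ⟨U₁ ×ˢ U₂, (F₁.open_source.inter hUopen).prod (F₂.open_source.inter hUopen),
      ⟨⟨ht₁src, ht₁N, by exact Metric.mem_ball_self hr0⟩,
       ⟨ht₂src, ht₂N, by
         simp only [Set.mem_preimage]
         rw [← hAeq]
         exact Metric.mem_ball_self hr0⟩⟩, ?_⟩
    refine Set.Countable.mono ?_ hzeros
    rintro x ⟨⟨s₁, s₂⟩, ⟨hW, hU⟩, rfl⟩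
    obtain ⟨hw1, hw2, hwY1, hwY2, hwne, hwA, hwV, -⟩ := hW
    obtain ⟨⟨hs₁src, -, hs₁B⟩, ⟨hs₂src, -, hs₂B⟩⟩ := hU
    set a := auxA h s₁ with ha
    have hsymm1 : F₁.symm a = s₁ := by
      have := F₁.left_inv hs₁src
      rwa [hcoe1] at this
    have hsymm2 : F₂.symm a = s₂ := by
      have := F₂.left_inv hs₂src
      rwa [hcoe2, ← hwA] at this
    refine ⟨hs₁B, ?_⟩
    rw [hE₃]
    simp only
    rw [hsymm1, hsymm2, hwV]
    ring

end local_sec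

section global_sec
variable {h : ℂ → ℂ} (hd : Differentiable ℂ h)
include hd

lemma aux_W_countable {E₀ : Set ℂ} (h0 : (0:ℂ) ∈ E₀)
    (hdeg : ∀ s : ℂ, 1+s^2 ≠ 0 → auxYc s ≠ 0 → auxD h s = 0 → auxA h s ∈ E₀) :
    ((fun q : ℂ × ℂ => auxA h q.1) '' auxW h E₀).Countable := by
  have hloc := fun (p : auxW h E₀) => aux_local hd h0 hdeg p.2
  choose U hUo hUm hUc using hloc
  obtain ⟨t, htc, hteq⟩ := TopologicalSpace.isOpen_iUnion_countable U hUo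
  have hcover : auxW h E₀ ⊆ ⋃ i ∈ t, U i := by
    intro z hz
    rw [hteq]
    exact Set.mem_iUnion.2 ⟨⟨z, hz⟩, hUm ⟨z, hz⟩⟩
  have himg : (fun q : ℂ × ℂ => auxA h q.1) '' auxW h E₀ ⊆
      ⋃ i ∈ t, (fun q : ℂ × ℂ => auxA h q.1) '' (auxW h E₀ ∩ U i) := by
    rintro x ⟨z, hz, rfl⟩
    obtain ⟨i, hit, hiz⟩ := Set.mem_iUnion₂.mp (hcover hz)
    exact Set.mem_iUnion₂.2 ⟨i, hit, ⟨z, ⟨hz, hiz⟩, rfl⟩⟩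
  exact Set.Countable.mono himg (Set.Countable.biUnion htc fun i _ => hUc i)

lemma aux_deriv_H (a u : ℂ) :
    deriv (fun z => Complex.cos z * h (Complex.sin z) + a * Complex.sin z) u =
      auxg h (Complex.sin u) + a * Complex.cos u := by
  have h1 : HasDerivAt (fun z => Complex.cos z * h (Complex.sin z) + a * Complex.sin z)
      ((-Complex.sin u) * h (Complex.sin u) +
        Complex.cos u * (deriv h (Complex.sin u) * Complex.cos u) + a * Complex.cos u) u := by
    refine HasDerivAt.add ?_ ((Complex.hasDerivAt_sin u).const_mul a)
    exact (Complex.hasDerivAt_cos u).mul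
      (((hd (Complex.sin u)).hasDerivAt).comp u (Complex.hasDerivAt_sin u))
  rw [h1.deriv, auxg]
  linear_combination deriv h (Complex.sin u) * (Complex.sin_sq_add_cos_sq u)

end global_sec

lemma aux_param {u : ℂ} (hc : 1 + Complex.cos u ≠ 0) :
    1 + (Complex.sin u / (1+Complex.cos u))^2 = 2/(1+Complex.cos u) ∧
    auxX (Complex.sin u / (1+Complex.cos u)) = Complex.sin u ∧
    auxYc (Complex.sin u / (1+Complex.cos u)) = Complex.cos u := by
  have hsq : Complex.sin u^2 = 1 - Complex.cos u^2 := by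
    linear_combination Complex.sin_sq_add_cos_sq u
  have hq : 1 + (Complex.sin u / (1+Complex.cos u))^2 = 2/(1+Complex.cos u) := by
    field_simp
    linear_combination hsq
  have hqne : 1 + (Complex.sin u / (1+Complex.cos u))^2 ≠ 0 := by
    rw [hq]
    exact div_ne_zero two_ne_zero hc
  refine ⟨hq, ?_, ?_⟩
  · rw [auxX, hq]
    field_simp
  · rw [auxYc, div_eq_iff hqne, hq]
    field_simp
    linear_combination -hsq
end



/-- Let h be a transcendental entire function with h(1) ≠ 0 and
h(−1) ≠ 0, and for a ∈ ℂ put H_a(z) := cos z · h(sin z) + a · sin z. Then there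
exists an at most countable set E ⊂ ℂ such that for every a ∉ E, every c ∈ ℂ,
and any two solutions u, v of H_a(z) = c, H_a′(z) = 0, one has
cos u = cos v and sin u = sin v. -/
theorem stmt1 (h : ℂ → ℂ) (hdiff : Differentiable ℂ h)
    (htrans : ∀ p : Polynomial ℂ, h ≠ fun z => p.eval z)
    (h1 : h 1 ≠ 0) (hm1 : h (-1) ≠ 0) :
    ∃ E : Set ℂ, E.Countable ∧
      ∀ a : ℂ, a ∉ E → ∀ c : ℂ, ∀ u v : ℂ,
        Complex.cos u * h (Complex.sin u) + a * Complex.sin u = c →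
        deriv (fun z => Complex.cos z * h (Complex.sin z) + a * Complex.sin z) u = 0 →
        Complex.cos v * h (Complex.sin v) + a * Complex.sin v = c →
        deriv (fun z => Complex.cos z * h (Complex.sin z) + a * Complex.sin z) v = 0 →
        Complex.cos u = Complex.cos v ∧ Complex.sin u = Complex.sin v := by
  classical
  have hΩopen : IsOpen {s : ℂ | 1+s^2 ≠ 0} := by
    have hcont : Continuous fun s : ℂ => 1+s^2 := continuous_const.add (continuous_pow 2)
    exact isOpen_compl_singleton.preimage hcont
  have hDanal : AnalyticOnNhd ℂ (auxD h) {s : ℂ | 1+s^2 ≠ 0} :=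
    fun s hs => analyticAt_auxD hdiff hs
  have h1Ω : (1:ℂ) ∈ {s : ℂ | 1+s^2 ≠ 0} := by norm_num
  have hD1ne : auxD h 1 ≠ 0 := by
    rw [auxD_one]
    exact mul_ne_zero (by norm_num) h1
  have hdegC : {z | z ∈ {s : ℂ | 1+s^2 ≠ 0} ∧ auxD h z = 0}.Countable :=
    aux_countable_zeros hΩopen aux_omega_preconnected hDanal h1Ω hD1ne
  have hSdegC : {s : ℂ | 1+s^2 ≠ 0 ∧ auxYc s ≠ 0 ∧ auxD h s = 0}.Countable := by
    have hsub : {s : ℂ | 1+s^2 ≠ 0 ∧ auxYc s ≠ 0 ∧ auxD h s = 0} ⊆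
        {z | z ∈ {s : ℂ | 1+s^2 ≠ 0} ∧ auxD h z = 0} := fun s hs => ⟨hs.1, hs.2.2⟩
    exact Set.Countable.mono hsub hdegC
  set E₀ : Set ℂ := insert 0 (insert (auxg h 0)
    (auxA h '' {s : ℂ | 1+s^2 ≠ 0 ∧ auxYc s ≠ 0 ∧ auxD h s = 0})) with hE₀def
  have hE₀C : E₀.Countable := ((hSdegC.image _).insert _).insert _
  have h0E₀ : (0:ℂ) ∈ E₀ := Set.mem_insert _ _
  have hg0E₀ : auxg h 0 ∈ E₀ := Set.mem_insert_of_mem _ (Set.mem_insert _ _)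
  have hdeg : ∀ s : ℂ, 1+s^2 ≠ 0 → auxYc s ≠ 0 → auxD h s = 0 → auxA h s ∈ E₀ :=
    fun s hq hY hD =>
      Set.mem_insert_of_mem _ (Set.mem_insert_of_mem _ ⟨s, ⟨hq, hY, hD⟩, rfl⟩)
  have hWC := aux_W_countable hdiff h0E₀ hdeg
  refine ⟨E₀ ∪ ((fun q : ℂ × ℂ => auxA h q.1) '' auxW h E₀), hE₀C.union hWC, ?_⟩
  intro a haE c u v hVu hDu hVv hDv
  have haE₀ : a ∉ E₀ := fun hx => haE (Or.inl hx)
  rw [aux_deriv_H hdiff] at hDu hDv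
  have hg1 : auxg h 1 = -h 1 := by norm_num [auxg]
  have hgm1 : auxg h (-1) = h (-1) := by norm_num [auxg]
  have key_cos : ∀ w : ℂ, auxg h (Complex.sin w) + a * Complex.cos w = 0 →
      Complex.cos w ≠ 0 ∧ 1 + Complex.cos w ≠ 0 := by
    intro w hw
    have hcos0 : Complex.cos w ≠ 0 := by
      intro hc0
      rw [hc0, mul_zero, add_zero] at hw
      have hsin : Complex.sin w ^ 2 = 1 := by
        have hpyth := Complex.sin_sq_add_cos_sq w
        rw [hc0] at hpyth
        simpa using hpyth
      have hfac : (Complex.sin w - 1) * (Complex.sin w + 1) = 0 := by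
        linear_combination hsin
      rcases mul_eq_zero.mp hfac with hh | hh
      · have hs1 : Complex.sin w = 1 := by linear_combination hh
        rw [hs1, hg1] at hw
        exact h1 (by linear_combination -hw)
      · have hs1 : Complex.sin w = -1 := by linear_combination hh
        rw [hs1, hgm1] at hw
        exact hm1 hw
    refine ⟨hcos0, ?_⟩
    intro hcm
    have hcosm1 : Complex.cos w = -1 := by linear_combination hcm
    have hsin0 : Complex.sin w = 0 := by
      have hpyth := Complex.sin_sq_add_cos_sq w
      rw [hcosm1] at hpyth
      have : Complex.sin w ^ 2 = 0 := by linear_combination hpyth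
      exact pow_eq_zero_iff (n := 2) (by norm_num) |>.mp this
    rw [hsin0, hcosm1] at hw
    have haeq : a = auxg h 0 := by linear_combination -hw
    exact haE₀ (haeq ▸ hg0E₀)
  obtain ⟨hcu, hcu1⟩ := key_cos u hDu
  obtain ⟨hcv, hcv1⟩ := key_cos v hDv
  obtain ⟨hq1', hX1, hY1⟩ := aux_param hcu1
  obtain ⟨hq2', hX2, hY2⟩ := aux_param hcv1
  have hq1 : 1 + (Complex.sin u / (1+Complex.cos u))^2 ≠ 0 := by
    rw [hq1']; exact div_ne_zero two_ne_zero hcu1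
  have hq2 : 1 + (Complex.sin v / (1+Complex.cos v))^2 ≠ 0 := by
    rw [hq2']; exact div_ne_zero two_ne_zero hcv1
  have hYne1 : auxYc (Complex.sin u / (1+Complex.cos u)) ≠ 0 := by rw [hY1]; exact hcu
  have hYne2 : auxYc (Complex.sin v / (1+Complex.cos v)) ≠ 0 := by rw [hY2]; exact hcv
  have hA1 : auxA h (Complex.sin u / (1+Complex.cos u)) = a := by
    rw [auxA, auxG, hX1, hY1, div_eq_iff hcu]
    linear_combination -hDu
  have hA2 : auxA h (Complex.sin v / (1+Complex.cos v)) = a := by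
    rw [auxA, auxG, hX2, hY2, div_eq_iff hcv]
    linear_combination -hDv
  have hV1 : auxV h a (Complex.sin u / (1+Complex.cos u)) = c := by
    rw [auxV, hX1, hY1]; exact hVu
  have hV2 : auxV h a (Complex.sin v / (1+Complex.cos v)) = c := by
    rw [auxV, hX2, hY2]; exact hVv
  by_contra hconc
  have hs12 : Complex.sin u / (1+Complex.cos u) ≠ Complex.sin v / (1+Complex.cos v) := by
    intro he
    apply hconc
    constructor
    · rw [← hY1, he, hY2]
    · rw [← hX1, he, hX2]
  have hmem : ((Complex.sin u / (1+Complex.cos u), Complex.sin v / (1+Complex.cos v)) :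
      ℂ × ℂ) ∈ auxW h E₀ := by
    refine ⟨hq1, hq2, hYne1, hYne2, hs12, ?_, ?_, ?_⟩
    · dsimp only
      rw [hA1, hA2]
    · dsimp only
      rw [hA1, hV1, hV2]
    · dsimp only
      rw [hA1]
      exact haE₀
  refine haE (Or.inr ⟨_, hmem, ?_⟩)
  dsimp only
  exact hA1
end

section
/- Let H be a transcendental entire function with H(−z) = −H(z) for all z, H′(0) ≠ 0, and such that the entire function z ↦ H(sin z) has finite order. For a ∈ ℂ put H_a(z) := cos z · (H(sin z) + 2a). Then there exists an at most countable set E ⊂ ℂ such that for every a ∈ ℂ \ E, every c ∈ ℂ, and any two points z₁, z₂ with H_a(z₁) = c, H_a′(z₁) = 0, H_a(z₂) = c, and H_a′(z₂) = 0, one has cos z₁ = cos z₂. -/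
open Complex Set Topology Filter

/-- In a second-countable space, a set all of whose points are isolated is countable. -/
lemma my_countable_of_isolated {X : Type*} [TopologicalSpace X]
    [SecondCountableTopology X] {S : Set X}
    (h : ∀ x ∈ S, ∃ U : Set X, IsOpen U ∧ x ∈ U ∧ S ∩ U ⊆ {x}) : S.Countable := by
  obtain ⟨b, hbc, -, hb⟩ := TopologicalSpace.exists_countable_basis X
  have key : ∀ x : S, ∃ V : Set X, V ∈ b ∧ (x : X) ∈ V ∧ S ∩ V ⊆ {(x : X)} := by
    rintro ⟨x, hx⟩
    obtain ⟨U, hUo, hxU, hU⟩ := h x hx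
    obtain ⟨V, hVb, hxV, hVU⟩ := hb.exists_subset_of_mem_open hxU hUo
    exact ⟨V, hVb, hxV, fun y hy => hU ⟨hy.1, hVU hy.2⟩⟩
  choose V hVb hxV hV using key
  haveI : Countable b := hbc.to_subtype
  have hinj : Function.Injective (fun x : S => (⟨V x, hVb x⟩ : b)) := by
    rintro x y hxy
    have : (y : X) ∈ S ∩ V x := by
      simp only [Subtype.mk.injEq] at hxy
      exact ⟨y.2, by rw [hxy]; exact hxV y⟩
    have := hV x this
    exact Subtype.ext (by simpa using this.symm)
  have : Countable S := Function.Injective.countable hinj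
  exact Set.countable_coe_iff.mp this

/-- Let H be a transcendental entire function, odd, with H′(0) ≠ 0,
such that z ↦ H(sin z) has finite order. For a ∈ ℂ put
H_a(z) := cos z · (H(sin z) + 2a). Then there is an at most countable set E ⊂ ℂ
such that for every a ∉ E, every c ∈ ℂ, and any two points z₁, z₂ with
H_a(z₁) = c, H_a′(z₁) = 0, H_a(z₂) = c, H_a′(z₂) = 0, one has cos z₁ = cos z₂. -/
theorem stmt4 (H : ℂ → ℂ) (hH : Differentiable ℂ H)
    (htrans : ∀ p : Polynomial ℂ, H ≠ fun z => p.eval z)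
    (hodd : ∀ z : ℂ, H (-z) = -H z)
    (hd0 : deriv H 0 ≠ 0)
    (horder : ∃ C ρ : ℝ, 0 < C ∧ 0 < ρ ∧
      ∀ z : ℂ, ‖H (Complex.sin z)‖ ≤ C * Real.exp (‖z‖ ^ ρ)) :
    ∃ E : Set ℂ, E.Countable ∧
      ∀ a : ℂ, a ∉ E → ∀ c : ℂ, ∀ z₁ z₂ : ℂ,
        Complex.cos z₁ * (H (Complex.sin z₁) + 2 * a) = c →
        deriv (fun w => Complex.cos w * (H (Complex.sin w) + 2 * a)) z₁ = 0 →
        Complex.cos z₂ * (H (Complex.sin z₂) + 2 * a) = c →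
        deriv (fun w => Complex.cos w * (H (Complex.sin w) + 2 * a)) z₂ = 0 →
        Complex.cos z₁ = Complex.cos z₂ := by
  classical
  -- basic differentiability facts
  have hH' : Differentiable ℂ (deriv H) := by
    have := (hH.differentiableOn.analyticOnNhd isOpen_univ).deriv
    exact fun z => (this z (mem_univ z)).differentiableAt
  set K : ℂ → ℂ := fun s => (1 - s ^ 2) * deriv H s - s * H s with hKdef
  have hKd : Differentiable ℂ K := by
    apply Differentiable.sub
    · exact ((differentiable_const (1:ℂ)).sub (differentiable_pow 2)).mul hH'
    · exact differentiable_id.mul hH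
  have hK0 : K 0 = deriv H 0 := by simp [hKdef]
  set M : ℂ → ℂ := fun z => K (Complex.sin z) / (2 * Complex.sin z) with hMdef
  set V : ℂ → ℂ := fun z => Complex.cos z * (H (Complex.sin z) + 2 * M z) with hVdef
  -- analyticity of M on {sin ≠ 0}
  have hMa : ∀ z : ℂ, Complex.sin z ≠ 0 → AnalyticAt ℂ M z := by
    intro z hz
    exact ((hKd.comp Complex.differentiable_sin).analyticAt z).div
      (((differentiable_const (2:ℂ)).mul Complex.differentiable_sin).analyticAt z)
      (mul_ne_zero two_ne_zero hz)
  have hMdiff : ∀ z : ℂ, Complex.sin z ≠ 0 → DifferentiableAt ℂ M z :=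
    fun z hz => (hMa z hz).differentiableAt
  -- key algebraic identity on {sin ≠ 0}
  have hMK : ∀ z : ℂ, Complex.sin z ≠ 0 → K (Complex.sin z) = 2 * M z * Complex.sin z := by
    intro z hz
    rw [hMdef]
    field_simp
  -- derivative of H_a
  have hderiv : ∀ (a z : ℂ), deriv (fun w => Complex.cos w * (H (Complex.sin w) + 2 * a)) z
      = K (Complex.sin z) - 2 * a * Complex.sin z := by
    intro a z
    have hs : HasDerivAt Complex.sin (Complex.cos z) z := Complex.hasDerivAt_sin z
    have hHs : HasDerivAt (fun w => H (Complex.sin w))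
        (deriv H (Complex.sin z) * Complex.cos z) z :=
      (hH (Complex.sin z)).hasDerivAt.comp z hs
    have hsum : HasDerivAt (fun w => H (Complex.sin w) + 2 * a)
        (deriv H (Complex.sin z) * Complex.cos z) z := hHs.add_const _
    have hcos : HasDerivAt Complex.cos (-Complex.sin z) z := Complex.hasDerivAt_cos z
    have hmul : HasDerivAt (fun w => Complex.cos w * (H (Complex.sin w) + 2 * a)) _ z :=
      hcos.mul hsum
    rw [hmul.deriv]
    have hpy := Complex.sin_sq_add_cos_sq z
    simp only [hKdef]
    linear_combination (deriv H (Complex.sin z)) * hpy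
  -- at critical points, sin z ≠ 0 and M z = a
  have hcrit : ∀ (a z : ℂ),
      deriv (fun w => Complex.cos w * (H (Complex.sin w) + 2 * a)) z = 0 →
      Complex.sin z ≠ 0 ∧ M z = a := by
    intro a z h
    rw [hderiv] at h
    have hs : Complex.sin z ≠ 0 := by
      intro h0
      rw [h0] at h
      simp [hK0] at h
      exact hd0 h
    refine ⟨hs, ?_⟩
    have hKa : K (Complex.sin z) = 2 * a * Complex.sin z := by linear_combination h
    rw [hMdef]
    field_simp
    linear_combination hKa
  -- envelope identity: V' = 2 cos · M' on {sin ≠ 0}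
  have hV' : ∀ z : ℂ, Complex.sin z ≠ 0 →
      HasDerivAt V (2 * Complex.cos z * deriv M z) z := by
    intro z hz
    have hs : HasDerivAt Complex.sin (Complex.cos z) z := Complex.hasDerivAt_sin z
    have hHs : HasDerivAt (fun w => H (Complex.sin w))
        (deriv H (Complex.sin z) * Complex.cos z) z :=
      (hH (Complex.sin z)).hasDerivAt.comp z hs
    have hM : HasDerivAt M (deriv M z) z := (hMdiff z hz).hasDerivAt
    have hMc : HasDerivAt (fun w => 2 * M w) (2 * deriv M z) z := hM.const_mul 2
    have hsum : HasDerivAt (fun w => H (Complex.sin w) + 2 * M w)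
        (deriv H (Complex.sin z) * Complex.cos z + 2 * deriv M z) z := hHs.add hMc
    have hcos : HasDerivAt Complex.cos (-Complex.sin z) z := Complex.hasDerivAt_cos z
    have hmul := hcos.mul hsum
    have hgoal : -Complex.sin z * (H (Complex.sin z) + 2 * M z) +
        Complex.cos z * (deriv H (Complex.sin z) * Complex.cos z + 2 * deriv M z)
        = 2 * Complex.cos z * deriv M z := by
      have hpy := Complex.sin_sq_add_cos_sq z
      have hk := hMK z hz
      simp only [hKdef] at hk
      linear_combination (deriv H (Complex.sin z)) * hpy + hk
    rw [hgoal] at hmul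
    exact hmul
  -- analyticity of V on {sin ≠ 0}
  have hVa : ∀ z : ℂ, Complex.sin z ≠ 0 → AnalyticAt ℂ V z := by
    intro z hz
    exact (Complex.differentiable_cos.analyticAt z).mul
      (((hH.comp Complex.differentiable_sin).analyticAt z).add
        (analyticAt_const.mul (hMa z hz)))
  -- countability of the zero set of M'
  set Z : Set ℂ := {z : ℂ | Complex.sin z ≠ 0 ∧ deriv M z = 0} with hZdef
  have hZc : Z.Countable := by
    apply my_countable_of_isolated
    rintro z ⟨hz0, hdz⟩
    by_contra hcon
    push_neg at hcon
    -- M' vanishes frequently near z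
    have hΩo : IsOpen {w : ℂ | Complex.sin w ≠ 0} :=
      isOpen_compl_singleton.preimage Complex.continuous_sin
    have hM'a : AnalyticAt ℂ (deriv M) z := by
      have h1 : AnalyticOnNhd ℂ M {w : ℂ | Complex.sin w ≠ 0} := fun w hw => hMa w hw
      exact (h1.deriv_of_isOpen hΩo) z hz0
    have hfreq : ∃ᶠ w in 𝓝[≠] z, deriv M w = 0 := by
      rw [Filter.frequently_iff]
      intro U hU
      rw [mem_nhdsWithin] at hU
      obtain ⟨W, hWo, hzW, hWU⟩ := hU
      have hnotsub := hcon (W ∩ {w : ℂ | Complex.sin w ≠ 0}) (hWo.inter hΩo) ⟨hzW, hz0⟩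
      rw [Set.not_subset] at hnotsub
      obtain ⟨y, hy1, hy2⟩ := hnotsub
      exact ⟨y, hWU ⟨hy1.2.1, by simpa using hy2⟩, hy1.1.2⟩
    have hev : ∀ᶠ w in 𝓝 z, deriv M w = 0 :=
      hM'a.frequently_zero_iff_eventually_zero.mp hfreq
    -- M is constant on a small ball around z
    obtain ⟨ε, hε, hballs⟩ := Metric.eventually_nhds_iff_ball.mp
      (hev.and (hΩo.eventually_mem hz0))
    have hconst : ∀ y ∈ Metric.ball z ε, M y = M z := by
      intro y hy
      have hMd : DifferentiableOn ℂ M (Metric.ball z ε) := fun w hw =>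
        (hMdiff w (hballs w hw).2).differentiableWithinAt
      have hbound : ∀ w ∈ Metric.ball z ε, ‖fderivWithin ℂ M (Metric.ball z ε) w‖ ≤ 0 := by
        intro w hw
        rw [fderivWithin_of_isOpen Metric.isOpen_ball hw]
        have : HasDerivAt M 0 w := by
          have := (hMdiff w (hballs w hw).2).hasDerivAt
          rwa [(hballs w hw).1] at this
        rw [this.hasFDerivAt.fderiv]
        simp
      have := (convex_ball z ε).norm_image_sub_le_of_norm_fderivWithin_le hMd hbound
        (Metric.mem_ball_self hε) hy
      have h0 : ‖M y - M z‖ ≤ 0 := by simpa using this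
      have := norm_le_zero_iff.mp h0
      exact sub_eq_zero.mp this
    -- hence the entire function K(sin w) - 2 M z sin w vanishes identically
    set C := M z with hC
    set G : ℂ → ℂ := fun w => K (Complex.sin w) - 2 * C * Complex.sin w with hGdef
    have hGd : Differentiable ℂ G :=
      (hKd.comp Complex.differentiable_sin).sub
        ((differentiable_const (2*C)).mul Complex.differentiable_sin)
    have hGa : AnalyticOnNhd ℂ G univ := hGd.differentiableOn.analyticOnNhd isOpen_univ
    have hGz : G =ᶠ[𝓝 z] 0 := by
      rw [Filter.eventuallyEq_iff_exists_mem]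
      refine ⟨Metric.ball z ε, Metric.isOpen_ball.mem_nhds (Metric.mem_ball_self hε), ?_⟩
      intro y hy
      have h1 := hMK y (hballs y hy).2
      have h2 := hconst y hy
      simp only [hGdef, Pi.zero_apply]
      rw [h1, h2]
      ring
    have hGall : EqOn G 0 univ :=
      hGa.eqOn_zero_of_preconnected_of_eventuallyEq_zero isPreconnected_univ (mem_univ z) hGz
    have := hGall (mem_univ 0)
    simp only [hGdef, Complex.sin_zero, Pi.zero_apply, mul_zero, sub_zero, hK0] at this
    exact hd0 this
  -- countability of the set of "bad pairs"
  set T : Set (ℂ × ℂ) := {p : ℂ × ℂ | Complex.sin p.1 ≠ 0 ∧ Complex.sin p.2 ≠ 0 ∧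
    deriv M p.1 ≠ 0 ∧ deriv M p.2 ≠ 0 ∧ M p.1 = M p.2 ∧ V p.1 = V p.2 ∧
    Complex.cos p.1 ≠ Complex.cos p.2} with hTdef
  have hTc : T.Countable := by
    apply my_countable_of_isolated
    rintro p ⟨hs1, hs2, hd1, hd2, hMM, hVV, hcc⟩
    set α := deriv M p.1 with hα
    set β := deriv M p.2 with hβ
    set γ := 2 * Complex.cos p.1 * α with hγ
    set δ := 2 * Complex.cos p.2 * β with hδ
    set D := α * δ - β * γ with hD
    have hDne : D ≠ 0 := by
      have hDeq : D = 2 * α * β * (Complex.cos p.2 - Complex.cos p.1) := by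
        rw [hD, hγ, hδ]; ring
      rw [hDeq]
      exact mul_ne_zero (mul_ne_zero (mul_ne_zero two_ne_zero hd1) hd2)
        (sub_ne_zero.mpr (Ne.symm hcc))
    have hMs1 : HasStrictDerivAt M α p.1 :=
      (hMa p.1 hs1).contDiffAt.hasStrictDerivAt (n := 1) one_ne_zero
    have hMs2 : HasStrictDerivAt M β p.2 :=
      (hMa p.2 hs2).contDiffAt.hasStrictDerivAt (n := 1) one_ne_zero
    have hVs1 : HasStrictDerivAt V γ p.1 := by
      have h := (hVa p.1 hs1).contDiffAt.hasStrictDerivAt (n := 1) one_ne_zero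
      rwa [(hV' p.1 hs1).deriv] at h
    have hVs2 : HasStrictDerivAt V δ p.2 := by
      have h := (hVa p.2 hs2).contDiffAt.hasStrictDerivAt (n := 1) one_ne_zero
      rwa [(hV' p.2 hs2).deriv] at h
    set Θ : ℂ × ℂ → ℂ × ℂ := fun q => (M q.1 - M q.2, V q.1 - V q.2) with hΘdef
    set fstL := ContinuousLinearMap.fst ℂ ℂ ℂ with hfstL
    set sndL := ContinuousLinearMap.snd ℂ ℂ ℂ with hsndL
    set L : (ℂ × ℂ) →L[ℂ] (ℂ × ℂ) := (α • fstL - β • sndL).prod (γ • fstL - δ • sndL) with hL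
    set Linv : (ℂ × ℂ) →L[ℂ] (ℂ × ℂ) :=
      ((δ / D) • fstL - (β / D) • sndL).prod ((γ / D) • fstL - (α / D) • sndL) with hLinv
    have hleft : Function.LeftInverse Linv L := by
      rintro ⟨x, y⟩
      simp only [hL, hLinv, hfstL, hsndL, ContinuousLinearMap.prod_apply,
        ContinuousLinearMap.sub_apply, ContinuousLinearMap.smul_apply,
        ContinuousLinearMap.coe_fst', ContinuousLinearMap.coe_snd', smul_eq_mul]
      refine Prod.ext ?_ ?_ <;> simp only <;> field_simp <;> ring
    have hright : Function.RightInverse Linv L := by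
      rintro ⟨x, y⟩
      simp only [hL, hLinv, hfstL, hsndL, ContinuousLinearMap.prod_apply,
        ContinuousLinearMap.sub_apply, ContinuousLinearMap.smul_apply,
        ContinuousLinearMap.coe_fst', ContinuousLinearMap.coe_snd', smul_eq_mul]
      refine Prod.ext ?_ ?_ <;> simp only <;> field_simp <;> ring
    set e : (ℂ × ℂ) ≃L[ℂ] (ℂ × ℂ) := ContinuousLinearEquiv.equivOfInverse L Linv hleft hright
      with hedef
    have hΘL : HasStrictFDerivAt Θ L p := by
      have hfst : HasStrictFDerivAt (fun q : ℂ × ℂ => q.1) fstL p := fstL.hasStrictFDerivAt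
      have hsnd : HasStrictFDerivAt (fun q : ℂ × ℂ => q.2) sndL p := sndL.hasStrictFDerivAt
      have h1 : HasStrictFDerivAt (fun q : ℂ × ℂ => M q.1) (α • fstL) p :=
        hMs1.comp_hasStrictFDerivAt p hfst
      have h2 : HasStrictFDerivAt (fun q : ℂ × ℂ => M q.2) (β • sndL) p :=
        hMs2.comp_hasStrictFDerivAt p hsnd
      have h3 : HasStrictFDerivAt (fun q : ℂ × ℂ => V q.1) (γ • fstL) p :=
        hVs1.comp_hasStrictFDerivAt p hfst
      have h4 : HasStrictFDerivAt (fun q : ℂ × ℂ => V q.2) (δ • sndL) p :=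
        hVs2.comp_hasStrictFDerivAt p hsnd
      exact HasStrictFDerivAt.prodMk (h1.sub h2) (h3.sub h4)
    have hΘe : HasStrictFDerivAt Θ (e : (ℂ × ℂ) →L[ℂ] (ℂ × ℂ)) p := hΘL
    set PH := HasStrictFDerivAt.toOpenPartialHomeomorph Θ hΘe with hPH
    have hcoe : ⇑PH = Θ := HasStrictFDerivAt.toOpenPartialHomeomorph_coe hΘe
    refine ⟨PH.source, PH.open_source, HasStrictFDerivAt.mem_toOpenPartialHomeomorph_source hΘe, ?_⟩
    rintro q ⟨hqT, hqU⟩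
    obtain ⟨q1s, q2s, qd1, qd2, qMM, qVV, qcc⟩ := hqT
    have hΘq : Θ q = Θ p := by
      simp only [hΘdef]
      rw [sub_eq_zero.mpr qMM, sub_eq_zero.mpr qVV, sub_eq_zero.mpr hMM, sub_eq_zero.mpr hVV]
    have : q = p := by
      apply PH.injOn hqU (HasStrictFDerivAt.mem_toOpenPartialHomeomorph_source hΘe)
      rw [hcoe]
      exact hΘq
    exact this
  -- assemble the exceptional set
  refine ⟨(M '' Z) ∪ ((fun p : ℂ × ℂ => M p.1) '' T),
    (hZc.image M).union (hTc.image _), ?_⟩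
  intro a ha c z₁ z₂ h1 h1' h2 h2'
  obtain ⟨hsz₁, hM₁⟩ := hcrit a z₁ h1'
  obtain ⟨hsz₂, hM₂⟩ := hcrit a z₂ h2'
  by_contra hne
  have hV₁ : V z₁ = c := by rw [hVdef]; simp only; rw [hM₁]; exact h1
  have hV₂ : V z₂ = c := by rw [hVdef]; simp only; rw [hM₂]; exact h2
  by_cases hdz1 : deriv M z₁ = 0
  · exact ha (Or.inl ⟨z₁, ⟨hsz₁, hdz1⟩, hM₁⟩)
  by_cases hdz2 : deriv M z₂ = 0
  · exact ha (Or.inl ⟨z₂, ⟨hsz₂, hdz2⟩, hM₂⟩)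
  exact ha (Or.inr ⟨(z₁, z₂),
    ⟨hsz₁, hsz₂, hdz1, hdz2, hM₁.trans hM₂.symm, hV₁.trans hV₂.symm, hne⟩, hM₁⟩)
end

section
/- Let H be a transcendental entire function with H(−z) = −H(z) for all z, H′(0) ≠ 0, and such that the entire function z ↦ H(sin z) has finite order. For a ∈ ℂ put H_a(z) := cos z · (H(sin z) + 2a). Then there exists an at most countable set E ⊂ ℂ such that for every a ∈ ℂ \ E the derivative H_a′ has only simple zeros; that is, for every z with H_a′(z) = 0 one has H_a″(z) ≠ 0. -/
open Set Filter Topology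

/-- The zero set of an entire function that is not zero at 0 is countable. -/
lemma countable_zero_set_aux {F : ℂ → ℂ} (hF : AnalyticOnNhd ℂ F univ) (h0 : F 0 ≠ 0) :
    {z : ℂ | F z = 0}.Countable := by
  have hne : ∀ x : ℂ, ∀ᶠ z in 𝓝[≠] x, F z ≠ 0 := by
    intro x
    rcases (hF x (mem_univ x)).eventually_eq_zero_or_eventually_ne_zero with h | h
    · exfalso
      have hfreq : ∃ᶠ z in 𝓝[≠] x, F z = 0 :=
        ((h.filter_mono nhdsWithin_le_nhds).frequently)
      have := hF.eqOn_zero_of_preconnected_of_frequently_eq_zero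
        isPreconnected_univ (mem_univ x) hfreq (mem_univ (0 : ℂ))
      exact h0 this
    · exact h
  have hkey : IsClosed {z : ℂ | F z = 0} ∧ DiscreteTopology {z : ℂ | F z = 0} := by
    rw [← isDiscrete_iff_discreteTopology, isClosed_and_discrete_iff]
    intro x
    rw [disjoint_principal_right]
    exact (hne x).mono fun z hz hz' => hz hz'
  exact hkey.1.isLindelof.countable hkey.2

/-- Let H be a transcendental entire function, odd, with H′(0) ≠ 0,
such that z ↦ H(sin z) has finite order. For a ∈ ℂ put
H_a(z) := cos z · (H(sin z) + 2a). Then there is an at most countable set E ⊂ ℂ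
such that for every a ∉ E the derivative H_a′ has only simple zeros. -/
theorem stmt5 (H : ℂ → ℂ) (hH : Differentiable ℂ H)
    (htrans : ∀ p : Polynomial ℂ, H ≠ fun z => p.eval z)
    (hodd : ∀ z : ℂ, H (-z) = -H z)
    (hd0 : deriv H 0 ≠ 0)
    (horder : ∃ C ρ : ℝ, 0 < C ∧ 0 < ρ ∧
      ∀ z : ℂ, ‖H (Complex.sin z)‖ ≤ C * Real.exp (‖z‖ ^ ρ)) :
    ∃ E : Set ℂ, E.Countable ∧
      ∀ a : ℂ, a ∉ E → ∀ z : ℂ,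
        deriv (fun w => Complex.cos w * (H (Complex.sin w) + 2 * a)) z = 0 →
        deriv (deriv (fun w => Complex.cos w * (H (Complex.sin w) + 2 * a))) z ≠ 0 := by
  set g : ℂ → ℂ := fun w => H (Complex.sin w) with hg_def
  have hgd : Differentiable ℂ g := hH.comp Complex.differentiable_sin
  have hga : AnalyticOnNhd ℂ g univ :=
    hgd.differentiableOn.analyticOnNhd isOpen_univ
  have hg'd : Differentiable ℂ (deriv g) :=
    differentiableOn_univ.mp (hga.deriv.differentiableOn)
  have hg''d : Differentiable ℂ (deriv (deriv g)) :=
    differentiableOn_univ.mp (hga.deriv.deriv.differentiableOn)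
  -- chain rule for g
  have hg' : ∀ z : ℂ, deriv g z = deriv H (Complex.sin z) * Complex.cos z := by
    intro z
    have : HasDerivAt g (deriv H (Complex.sin z) * Complex.cos z) z :=
      ((hH (Complex.sin z)).hasDerivAt).comp z (Complex.hasDerivAt_sin z)
    exact this.deriv
  -- the auxiliary entire function F
  set F : ℂ → ℂ := fun z =>
    -(1 + Complex.sin z ^ 2) * deriv g z
      + Complex.sin z * Complex.cos z * deriv (deriv g) z with hF_def
  have hFd : Differentiable ℂ F := by
    apply Differentiable.add
    · exact (((differentiable_const _).add
        (Complex.differentiable_sin.pow 2)).neg.mul hg'd)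
    · exact ((Complex.differentiable_sin.mul Complex.differentiable_cos).mul hg''d)
  have hFa : AnalyticOnNhd ℂ F univ := hFd.differentiableOn.analyticOnNhd isOpen_univ
  have hF0 : F 0 ≠ 0 := by
    have h1 : deriv g 0 = deriv H 0 := by simp [hg' 0]
    simp only [hF_def, Complex.sin_zero, h1]
    simpa using hd0
  -- the countable bad set
  refine ⟨(fun z => (Complex.cos z * deriv g z / Complex.sin z - g z) / 2) ''
    {z : ℂ | F z = 0}, ((countable_zero_set_aux hFa hF0).image _), ?_⟩
  intro a ha z h1 h2
  -- first derivative formula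
  have hD1 : ∀ w : ℂ, HasDerivAt (fun w => Complex.cos w * (g w + 2 * a))
      (-Complex.sin w * (g w + 2 * a) + Complex.cos w * deriv g w) w := by
    intro w
    exact (Complex.hasDerivAt_cos w).mul ((hgd w).hasDerivAt.add_const (2 * a))
  have hd1fun : deriv (fun w => Complex.cos w * (g w + 2 * a)) =
      fun w => -Complex.sin w * (g w + 2 * a) + Complex.cos w * deriv g w :=
    funext fun w => (hD1 w).deriv
  have h1' : -Complex.sin z * (g z + 2 * a) + Complex.cos z * deriv g z = 0 := by
    rw [← (hD1 z).deriv]; exact h1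
  -- second derivative formula
  have hD2 : HasDerivAt (fun w => -Complex.sin w * (g w + 2 * a) + Complex.cos w * deriv g w)
      ((-Complex.cos z * (g z + 2 * a) + -Complex.sin z * deriv g z)
        + (-Complex.sin z * deriv g z + Complex.cos z * deriv (deriv g) z)) z := by
    exact (((Complex.hasDerivAt_sin z).neg.mul ((hgd z).hasDerivAt.add_const (2 * a)))).add
      ((Complex.hasDerivAt_cos z).mul (hg'd z).hasDerivAt)
  have h2' : (-Complex.cos z * (g z + 2 * a) + -Complex.sin z * deriv g z)
        + (-Complex.sin z * deriv g z + Complex.cos z * deriv (deriv g) z) = 0 := by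
    rw [← hD2.deriv, ← hd1fun]; exact h2
  have hpyth : Complex.sin z ^ 2 + Complex.cos z ^ 2 = 1 := Complex.sin_sq_add_cos_sq z
  -- sin z ≠ 0
  have hsin : Complex.sin z ≠ 0 := by
    intro hs
    have hcos : Complex.cos z ≠ 0 := by
      intro hc
      rw [hs, hc] at hpyth
      simp at hpyth
    have hgz : deriv g z = deriv H 0 * Complex.cos z := by rw [hg' z, hs]
    rw [hs] at h1'
    simp only [neg_zero, zero_mul, zero_add] at h1'
    rw [hgz] at h1'
    rcases mul_eq_zero.mp h1' with h | h
    · exact hcos h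
    · rcases mul_eq_zero.mp h with h' | h'
      · exact hd0 h'
      · exact hcos h'
  -- F z = 0
  have hFz : F z = 0 := by
    simp only [hF_def]
    linear_combination Complex.sin z * h2' - Complex.cos z * h1' + deriv g z * hpyth
  -- a is in the bad set
  refine ha ⟨z, hFz, ?_⟩
  field_simp
  linear_combination h1'
end

section
/- Let P be a polynomial of degree n, let F and α be entire functions, and put H(z) := P(z) · F(α(z)). Suppose that α′ has at least one zero and that H′ and α′ have no common zeros. Then there exists an at most countable set E ⊂ ℂ such that for every a ∈ ℂ \ E and every c ∈ ℂ, the set {z ∈ ℂ : H(z) − a·α(z) = c and H′(z) − a·α′(z) = 0} has at most n elements. -/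
open Topology Filter Set

/-- A set all of whose points are isolated is countable (in a second countable space). -/
lemma stmt9_countable_of_isolated {S : Set ℂ} (h : ∀ a ∈ S, ∀ᶠ y in 𝓝[≠] a, y ∉ S) :
    S.Countable := by
  obtain ⟨b, bc, -, hb⟩ := TopologicalSpace.exists_countable_basis ℂ
  have key : ∀ a : S, ∃ t ∈ b, (a : ℂ) ∈ t ∧ ∀ y ∈ t, y ∈ S → y = (a : ℂ) := by
    rintro ⟨a, ha⟩
    have h2 : ∀ᶠ y in 𝓝 a, y ≠ a → y ∉ S := by
      simpa [eventually_nhdsWithin_iff] using h a ha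
    obtain ⟨t, htb, hat, hts⟩ := hb.mem_nhds_iff.1 h2
    refine ⟨t, htb, hat, fun y hyt hyS => ?_⟩
    by_contra hne
    exact hts hyt hne hyS
  choose t ht hat hts using key
  haveI := bc.to_subtype
  have hinj : Function.Injective (fun a : S => (⟨t a, ht a⟩ : b)) := by
    intro a a' he
    have h1 : t a = t a' := congrArg Subtype.val he
    exact Subtype.ext (hts a' (a : ℂ) (h1 ▸ hat a) a.2)
  rw [← Set.countable_coe_iff]
  exact hinj.countable

/-- The image of a set on which a function is locally constant is countable. -/
lemma stmt9_countable_image_of_locally_const {f : ℂ → ℂ} {S : Set ℂ}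
    (h : ∀ z ∈ S, ∀ᶠ w in 𝓝 z, f w = f z) : (f '' S).Countable := by
  obtain ⟨b, bc, -, hb⟩ := TopologicalSpace.exists_countable_basis ℂ
  have key : ∀ a : S, ∃ t ∈ b, (a : ℂ) ∈ t ∧ ∀ y ∈ t, f y = f (a : ℂ) := by
    rintro ⟨a, ha⟩
    obtain ⟨t, htb, hat, hts⟩ := hb.mem_nhds_iff.1 (h a ha)
    exact ⟨t, htb, hat, fun y hyt => hts hyt⟩
  choose t ht hat hts using key
  haveI := bc.to_subtype
  classical
  set j : S → b := fun a => (⟨t a, ht a⟩ : b) with hj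
  set g : b → ℂ := fun s => if H : ∃ a : S, t a = (s : Set ℂ) then f (H.choose : ℂ) else 0 with hg
  have hfact : ∀ a : S, f (a : ℂ) = g (j a) := by
    intro a
    have hex : ∃ a' : S, t a' = ((j a : b) : Set ℂ) := ⟨a, rfl⟩
    rw [hg]
    simp only [dif_pos hex]
    have h1 : t hex.choose = t a := hex.choose_spec
    have h2 : (hex.choose : ℂ) ∈ t a := h1 ▸ hat hex.choose
    exact (hts a _ h2).symm
  have : f '' S ⊆ Set.range (g ∘ j) := by
    rintro v ⟨z, hz, rfl⟩
    exact ⟨⟨z, hz⟩, (hfact ⟨z, hz⟩).symm⟩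
  exact (((Set.countable_range g).mono (Set.range_comp_subset_range j g))).mono this

/-- There is a rational ball around any point of an open set, inside the set. -/
lemma stmt9_exists_rat_ball {V : Set ℂ} (hV : IsOpen V) {z : ℂ} (hz : z ∈ V) :
    ∃ p : (ℚ × ℚ) × ℚ, z ∈ Metric.ball (⟨p.1.1, p.1.2⟩ : ℂ) (p.2 : ℝ) ∧
      Metric.ball (⟨p.1.1, p.1.2⟩ : ℂ) (p.2 : ℝ) ⊆ V := by
  obtain ⟨ε, hε, hball⟩ := Metric.isOpen_iff.1 hV z hz
  obtain ⟨r, hr0, hrε⟩ := exists_rat_btwn (show (0:ℝ) < ε/3 by linarith)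
  have hr2 : (0:ℝ) < (r:ℝ)/2 := by linarith
  obtain ⟨q1, hq1⟩ := exists_rat_near z.re hr2
  obtain ⟨q2, hq2⟩ := exists_rat_near z.im hr2
  have hre : (z - (⟨q1, q2⟩ : ℂ)).re = z.re - (q1:ℝ) := rfl
  have him : (z - (⟨q1, q2⟩ : ℂ)).im = z.im - (q2:ℝ) := rfl
  have hd : dist z (⟨q1, q2⟩ : ℂ) < (r:ℝ) := by
    rw [Complex.dist_eq]
    calc ‖z - ⟨q1, q2⟩‖ ≤ |(z - (⟨q1, q2⟩:ℂ)).re| + |(z - (⟨q1, q2⟩:ℂ)).im| :=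
          Complex.norm_le_abs_re_add_abs_im _
      _ < (r:ℝ) := by rw [hre, him]; calc |z.re - (q1:ℝ)| + |z.im - (q2:ℝ)| < (r:ℝ)/2 + (r:ℝ)/2 := add_lt_add hq1 hq2
                        _ = (r:ℝ) := by ring
  refine ⟨⟨⟨q1, q2⟩, r⟩, Metric.mem_ball.2 hd, ?_⟩
  intro y hy
  apply hball
  rw [Metric.mem_ball] at hy ⊢
  have ht : dist y z ≤ dist y (⟨q1, q2⟩ : ℂ) + dist (⟨q1, q2⟩ : ℂ) z := dist_triangle _ _ _
  have hd2 : dist (⟨q1, q2⟩ : ℂ) z < (r:ℝ) := by rw [dist_comm]; exact hd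
  have hy' : dist y (⟨q1, q2⟩ : ℂ) < (r:ℝ) := hy
  linarith
/-- Let P be a polynomial of degree n, let F and α be entire
functions, and put H(z) := P(z)·F(α(z)). Suppose α′ has at least one zero and
H′ and α′ have no common zeros. Then there is an at most countable set E ⊂ ℂ
such that for every a ∉ E and every c ∈ ℂ the set
{z : H(z) − a·α(z) = c and H′(z) − a·α′(z) = 0} has at most n elements. -/
theorem stmt9 (P : Polynomial ℂ) (n : ℕ) (hP : P.degree = n)
    (F α : ℂ → ℂ) (hF : Differentiable ℂ F) (hα : Differentiable ℂ α)
    (H : ℂ → ℂ) (hHdef : ∀ z : ℂ, H z = P.eval z * F (α z))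
    (hzero : ∃ z : ℂ, deriv α z = 0)
    (hno : ∀ z : ℂ, ¬(deriv H z = 0 ∧ deriv α z = 0)) :
    ∃ E : Set ℂ, E.Countable ∧
      ∀ a : ℂ, a ∉ E → ∀ c : ℂ,
        ∃ s : Finset ℂ, s.card ≤ n ∧
          {z : ℂ | H z - a * α z = c ∧ deriv H z - a * deriv α z = 0} ⊆ ↑s := by
  classical
  have hHfun : H = fun z => P.eval z * F (α z) := funext hHdef
  have hHd : Differentiable ℂ H := by
    rw [hHfun]; exact (P.differentiable).mul (hF.comp hα)
  have hH' : ∀ z : ℂ, HasDerivAt H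
      (P.derivative.eval z * F (α z) + P.eval z * (deriv F (α z) * deriv α z)) z := by
    intro z
    have h1 : HasDerivAt (fun w => F (α w)) (deriv F (α z) * deriv α z) z :=
      (hF (α z)).hasDerivAt.comp z (hα z).hasDerivAt
    have h2 := (P.hasDerivAt z).mul h1
    rw [hHfun]; exact h2
  have hHderiv : ∀ z, deriv H z
      = P.derivative.eval z * F (α z) + P.eval z * (deriv F (α z) * deriv α z) :=
    fun z => (hH' z).deriv
  have hHAna : AnalyticOnNhd ℂ H Set.univ := fun z _ => hHd.analyticAt z
  have hαAna : AnalyticOnNhd ℂ α Set.univ := fun z _ => hα.analyticAt z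
  have hHdAna : AnalyticOnNhd ℂ (deriv H) Set.univ := hHAna.deriv
  have hαdAna : AnalyticOnNhd ℂ (deriv α) Set.univ := hαAna.deriv
  have hαdCont : Continuous (deriv α) :=
    continuous_iff_continuousAt.2 fun z => (hαdAna z trivial).continuousAt
  set U : Set ℂ := {z | deriv α z ≠ 0} with hU
  have hUopen : IsOpen U := by
    have : U = deriv α ⁻¹' ({0}ᶜ) := rfl
    rw [this]
    exact isOpen_compl_singleton.preimage hαdCont
  set φ : ℂ → ℂ := fun z => deriv H z / deriv α z with hφdef
  have hφdiff : DifferentiableOn ℂ φ U := fun z hz =>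
    ((hHdAna z trivial).differentiableAt.differentiableWithinAt).div
      ((hαdAna z trivial).differentiableAt.differentiableWithinAt) hz
  have hφana : ∀ z ∈ U, AnalyticAt ℂ φ z := fun z hz =>
    hφdiff.analyticAt (hUopen.mem_nhds hz)
  have hφ'ana : ∀ z ∈ U, AnalyticAt ℂ (deriv φ) z := fun z hz =>
    (hφdiff.analyticOnNhd hUopen).deriv z hz
  have hφα : ∀ z ∈ U, φ z * deriv α z = deriv H z := fun z hz =>
    div_mul_cancel₀ _ hz
  have hφD : ∀ z ∈ U, HasDerivAt φ (deriv φ z) z := fun z hz =>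
    (hφana z hz).differentiableAt.hasDerivAt
  have hφstrict : ∀ z ∈ U, HasStrictDerivAt φ (deriv φ z) z := fun z hz =>
    ((hφana z hz).contDiffAt (n := 1)).hasStrictDerivAt one_ne_zero
  set ψ : ℂ → ℂ := fun z => H z - φ z * α z with hψdef
  have hψD : ∀ z ∈ U, HasDerivAt ψ (-(deriv φ z * α z)) z := by
    intro z hz
    have h1 : HasDerivAt (fun w => φ w * α w) (deriv φ z * α z + φ z * deriv α z) z :=
      (hφD z hz).mul (hα z).hasDerivAt
    have h2 := (hHd z).hasDerivAt.sub h1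
    have h3 : deriv H z - (deriv φ z * α z + φ z * deriv α z) = -(deriv φ z * α z) := by
      rw [hφα z hz]; ring
    exact h3 ▸ h2
  set D : (ℚ × ℚ) × ℚ → Set ℂ := fun p => Metric.ball (⟨p.1.1, p.1.2⟩ : ℂ) (p.2 : ℝ) with hD
  set good : (ℚ × ℚ) × ℚ → Prop :=
    fun p => D p ⊆ U ∧ Set.InjOn φ (D p) ∧ ∀ z ∈ D p, deriv φ z ≠ 0 with hgood
  have hcover : ∀ z ∈ U, deriv φ z ≠ 0 → ∃ p, good p ∧ z ∈ D p := by
    intro z hz hdz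
    have hstrict : HasStrictFDerivAt φ _ z := (hφstrict z hz).hasStrictFDerivAt_equiv hdz
    have hsrc : z ∈ (hstrict.toOpenPartialHomeomorph φ).source :=
      hstrict.mem_toOpenPartialHomeomorph_source
    have hinj : Set.InjOn φ (hstrict.toOpenPartialHomeomorph φ).source := by
      have h := (hstrict.toOpenPartialHomeomorph φ).injOn
      rwa [hstrict.toOpenPartialHomeomorph_coe] at h
    have hopen2 : IsOpen (U ∩ deriv φ ⁻¹' ({0}ᶜ)) := by
      have hcont : ContinuousOn (deriv φ) U := fun w hw =>
        (hφ'ana w hw).continuousAt.continuousWithinAt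
      exact hcont.isOpen_inter_preimage hUopen isOpen_compl_singleton
    have hVopen : IsOpen ((hstrict.toOpenPartialHomeomorph φ).source ∩ (U ∩ deriv φ ⁻¹' ({0}ᶜ))) :=
      (hstrict.toOpenPartialHomeomorph φ).open_source.inter hopen2
    obtain ⟨p, hzp, hpV⟩ := stmt9_exists_rat_ball hVopen ⟨hsrc, hz, hdz⟩
    refine ⟨p, ⟨?_, ?_, ?_⟩, hzp⟩
    · exact fun w hw => (hpV hw).2.1
    · exact hinj.mono (fun w hw => (hpV hw).1)
    · exact fun w hw => (hpV hw).2.2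
  set Bad : ((ℚ × ℚ) × ℚ) → ((ℚ × ℚ) × ℚ) → Set ℂ := fun p₁ p₂ =>
    {a | good p₁ ∧ good p₂ ∧ ∃ z₁ ∈ D p₁, ∃ z₂ ∈ D p₂,
      φ z₁ = a ∧ φ z₂ = a ∧ ψ z₁ = ψ z₂ ∧ α z₁ ≠ α z₂} with hBadDef
  have hBadCount : ∀ p₁ p₂, (Bad p₁ p₂).Countable := by
    intro p₁ p₂
    apply stmt9_countable_of_isolated
    rintro a₀ ⟨hg₁, hg₂, z₁, hz₁D, z₂, hz₂D, hφ1, hφ2, hψeq, hαne⟩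
    have hz₁U : z₁ ∈ U := hg₁.1 hz₁D
    have hz₂U : z₂ ∈ U := hg₂.1 hz₂D
    have hd₁ : deriv φ z₁ ≠ 0 := hg₁.2.2 z₁ hz₁D
    have hd₂ : deriv φ z₂ ≠ 0 := hg₂.2.2 z₂ hz₂D
    have e₁ := (hφstrict z₁ hz₁U).hasStrictFDerivAt_equiv hd₁
    have e₂ := (hφstrict z₂ hz₂U).hasStrictFDerivAt_equiv hd₂
    set w₁ := HasStrictFDerivAt.localInverse φ _ z₁ e₁ with hw₁def
    set w₂ := HasStrictFDerivAt.localInverse φ _ z₂ e₂ with hw₂def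
    have hw₁a : w₁ a₀ = z₁ := by rw [← hφ1]; exact e₁.localInverse_apply_image
    have hw₂a : w₂ a₀ = z₂ := by rw [← hφ2]; exact e₂.localInverse_apply_image
    have hw₁c : ContinuousAt w₁ a₀ := by rw [← hφ1]; exact e₁.localInverse_continuousAt
    have hw₂c : ContinuousAt w₂ a₀ := by rw [← hφ2]; exact e₂.localInverse_continuousAt
    have hw₁r : ∀ᶠ y in 𝓝 a₀, φ (w₁ y) = y := by
      rw [← hφ1]; exact e₁.eventually_right_inverse
    have hw₂r : ∀ᶠ y in 𝓝 a₀, φ (w₂ y) = y := by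
      rw [← hφ2]; exact e₂.eventually_right_inverse
    have hw₁d : HasDerivAt w₁ (deriv φ z₁)⁻¹ a₀ := by
      rw [← hφ1]; exact ((hφstrict z₁ hz₁U).to_localInverse hd₁).hasDerivAt
    have hw₂d : HasDerivAt w₂ (deriv φ z₂)⁻¹ a₀ := by
      rw [← hφ2]; exact ((hφstrict z₂ hz₂U).to_localInverse hd₂).hasDerivAt
    set g : ℂ → ℂ := fun y => ψ (w₁ y) - ψ (w₂ y) with hgdef
    have hψ₁ : HasDerivAt ψ (-(deriv φ z₁ * α z₁)) (w₁ a₀) := by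
      rw [hw₁a]; exact hψD z₁ hz₁U
    have hψ₂ : HasDerivAt ψ (-(deriv φ z₂ * α z₂)) (w₂ a₀) := by
      rw [hw₂a]; exact hψD z₂ hz₂U
    have hc₁ : HasDerivAt (fun y => ψ (w₁ y))
        (-(deriv φ z₁ * α z₁) * (deriv φ z₁)⁻¹) a₀ := hψ₁.comp a₀ hw₁d
    have hc₂ : HasDerivAt (fun y => ψ (w₂ y))
        (-(deriv φ z₂ * α z₂) * (deriv φ z₂)⁻¹) a₀ := hψ₂.comp a₀ hw₂d
    have hval : -(deriv φ z₁ * α z₁) * (deriv φ z₁)⁻¹ -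
        -(deriv φ z₂ * α z₂) * (deriv φ z₂)⁻¹ = α z₂ - α z₁ := by
      field_simp
      ring
    have hgD : HasDerivAt g (α z₂ - α z₁) a₀ := by
      have h := hc₁.sub hc₂
      rwa [hval] at h
    have hg0 : g a₀ = 0 := by
      simp only [hgdef, hw₁a, hw₂a, hψeq, sub_self]
    have hgne : α z₂ - α z₁ ≠ 0 := sub_ne_zero.2 (Ne.symm hαne)
    have hev := hgD.eventually_ne (c := g a₀) hgne
    have hb₁mem : D p₁ ∈ 𝓝 (w₁ a₀) := by
      rw [hw₁a, hD]; exact Metric.isOpen_ball.mem_nhds hz₁D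
    have hb₂mem : D p₂ ∈ 𝓝 (w₂ a₀) := by
      rw [hw₂a, hD]; exact Metric.isOpen_ball.mem_nhds hz₂D
    have hev₁ : ∀ᶠ y in 𝓝 a₀, w₁ y ∈ D p₁ := hw₁c.eventually_mem hb₁mem
    have hev₂ : ∀ᶠ y in 𝓝 a₀, w₂ y ∈ D p₂ := hw₂c.eventually_mem hb₂mem
    have hall := hev.and ((((hw₁r.and hw₂r).and (hev₁.and hev₂))).filter_mono
      nhdsWithin_le_nhds)
    refine hall.mono ?_
    rintro y ⟨hy, ⟨hr₁, hr₂⟩, hbb₁, hbb₂⟩ hyBad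
    obtain ⟨-, -, u₁, hu₁, u₂, hu₂, hφu₁, hφu₂, hψu, hαu⟩ := hyBad
    have he₁ : u₁ = w₁ y := hg₁.2.1 hu₁ hbb₁ (by rw [hφu₁, hr₁])
    have he₂ : u₂ = w₂ y := hg₂.2.1 hu₂ hbb₂ (by rw [hφu₂, hr₂])
    have hgy : g y = 0 := by
      rw [hgdef]
      simp only []
      rw [← he₁, ← he₂, hψu, sub_self]
    exact hy (hgy.trans hg0.symm)
  set Cset : Set ℂ := {z | z ∈ U ∧ deriv φ z = 0} with hCsetDef
  set C1 : Set ℂ := {z | z ∈ Cset ∧ ∀ᶠ w in 𝓝 z, φ w = φ z} with hC1Def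
  have hC2count : (Cset \ C1).Countable := by
    apply stmt9_countable_of_isolated
    rintro z ⟨⟨hzU, hzd⟩, hz1⟩
    rcases (hφ'ana z hzU).eventually_eq_zero_or_eventually_ne_zero with hcase | hcase
    · exfalso
      apply hz1
      refine ⟨⟨hzU, hzd⟩, ?_⟩
      have hUev : ∀ᶠ w in 𝓝 z, w ∈ U := hUopen.mem_nhds hzU
      obtain ⟨r, hr, hball⟩ := Metric.eventually_nhds_iff_ball.1 (hcase.and hUev)
      have hconst : ∀ w ∈ Metric.ball z r, φ w = φ z := by
        intro w hw
        apply Convex.is_const_of_fderivWithin_eq_zero (convex_ball z r)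
          (hφdiff.mono (fun u hu => (hball u hu).2)) ?_ hw (Metric.mem_ball_self hr)
        intro u hu
        have hDu : DifferentiableAt ℂ φ u := (hφana u (hball u hu).2).differentiableAt
        have h0 : HasDerivAt φ 0 u := (hball u hu).1 ▸ hDu.hasDerivAt
        have hf0 : HasFDerivAt φ (0 : ℂ →L[ℂ] ℂ) u := by
          have h := h0.hasFDerivAt
          have heq : (ContinuousLinearMap.toSpanSingleton ℂ (0 : ℂ)) = 0 := by
            ext; simp
          rwa [heq] at h
        rw [fderivWithin_of_isOpen Metric.isOpen_ball hu]
        exact hf0.fderiv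
      exact Metric.eventually_nhds_iff_ball.2 ⟨r, hr, hconst⟩
    · refine hcase.mono ?_
      intro w hw hwmem
      exact hw hwmem.1.2
  have hC1img : (φ '' C1).Countable :=
    stmt9_countable_image_of_locally_const (fun z hz => hz.2)
  have hCimg : (φ '' Cset).Countable := by
    have hsub : φ '' Cset ⊆ φ '' C1 ∪ φ '' (Cset \ C1) := by
      rintro v ⟨z, hz, rfl⟩
      by_cases h : z ∈ C1
      · exact Or.inl ⟨z, h, rfl⟩
      · exact Or.inr ⟨z, ⟨hz, h⟩, rfl⟩
    exact (hC1img.union (hC2count.image φ)).mono hsub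
  refine ⟨φ '' Cset ∪ {0} ∪ ⋃ p₁, ⋃ p₂, Bad p₁ p₂, ?_, ?_⟩
  · exact (hCimg.union (Set.countable_singleton 0)).union
      (Set.countable_iUnion fun p₁ => Set.countable_iUnion fun p₂ => hBadCount p₁ p₂)
  intro a haE c
  have haC : a ∉ φ '' Cset := fun h => haE (Or.inl (Or.inl h))
  have ha0 : a ≠ 0 := fun h => haE (Or.inl (Or.inr (by rw [h]; exact rfl)))
  have haB : ∀ p₁ p₂, a ∉ Bad p₁ p₂ := fun p₁ p₂ h =>
    haE (Or.inr (Set.mem_iUnion.2 ⟨p₁, Set.mem_iUnion.2 ⟨p₂, h⟩⟩))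
  set Sol : Set ℂ := {z : ℂ | H z - a * α z = c ∧ deriv H z - a * deriv α z = 0} with hSolDef
  have hSolU : ∀ z ∈ Sol, deriv α z ≠ 0 := by
    intro z hz h0
    have h1 : deriv H z = 0 := by
      have h := hz.2
      rw [h0] at h
      simpa using h
    exact hno z ⟨h1, h0⟩
  have hSolD : ∀ z ∈ Sol, deriv H z = a * deriv α z := fun z hz => sub_eq_zero.1 hz.2
  have hSolφ : ∀ z ∈ Sol, φ z = a := by
    intro z hz
    show deriv H z / deriv α z = a
    rw [hSolD z hz]
    exact mul_div_cancel_right₀ a (hSolU z hz)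
  have hSolφ' : ∀ z ∈ Sol, deriv φ z ≠ 0 := by
    intro z hz h0
    exact haC ⟨z, ⟨hSolU z hz, h0⟩, hSolφ z hz⟩
  have hSolψ : ∀ z ∈ Sol, ψ z = c := by
    intro z hz
    show H z - φ z * α z = c
    rw [hSolφ z hz]
    exact hz.1
  have hαconst : ∀ z₁ ∈ Sol, ∀ z₂ ∈ Sol, α z₁ = α z₂ := by
    intro z₁ h₁ z₂ h₂
    by_contra hne
    obtain ⟨p₁, hgp₁, hzp₁⟩ := hcover z₁ (hSolU z₁ h₁) (hSolφ' z₁ h₁)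
    obtain ⟨p₂, hgp₂, hzp₂⟩ := hcover z₂ (hSolU z₂ h₂) (hSolφ' z₂ h₂)
    exact haB p₁ p₂ ⟨hgp₁, hgp₂, z₁, hzp₁, z₂, hzp₂, hSolφ z₁ h₁, hSolφ z₂ h₂,
      by rw [hSolψ z₁ h₁, hSolψ z₂ h₂], hne⟩
  have hn1 : 1 ≤ n := by
    by_contra hlt
    have hn0 : n = 0 := by omega
    obtain ⟨z₀, hz₀⟩ := hzero
    have hPC : P = Polynomial.C (P.coeff 0) :=
      Polynomial.eq_C_of_degree_le_zero (by rw [hP, hn0]; exact le_rfl)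
    have hder : P.derivative = 0 := by rw [hPC]; simp
    have hH0 : deriv H z₀ = 0 := by
      rw [hHderiv z₀, hder, hz₀]
      simp
    exact hno z₀ ⟨hH0, hz₀⟩
  rcases Set.eq_empty_or_nonempty Sol with hemp | ⟨zb, hzb⟩
  · exact ⟨∅, by simp, by rw [hemp]; simp⟩
  have hkey : ∃ t : ℂ, ∀ z ∈ Sol, P.eval z = t := by
    by_cases hFw : F (α zb) = 0
    · have hid : ∀ z ∈ Sol, P.eval z * deriv F (α zb) = a := by
        intro z hz
        have hw : α z = α zb := hαconst z hz zb hzb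
        have h1 : deriv H z = a * deriv α z := hSolD z hz
        have h2 := hHderiv z
        rw [hw, hFw] at h2
        have h4 : P.eval z * (deriv F (α zb) * deriv α z) = a * deriv α z := by
          rw [← h1, h2]; ring
        apply mul_right_cancel₀ (hSolU z hz)
        rw [mul_assoc]
        exact h4
      have hdF : deriv F (α zb) ≠ 0 := by
        intro h0
        apply ha0
        have h := hid zb hzb
        rw [h0, mul_zero] at h
        exact h.symm
      refine ⟨a / deriv F (α zb), fun z hz => ?_⟩
      rw [eq_div_iff hdF]
      exact hid z hz
    · refine ⟨(a * α zb + c) / F (α zb), fun z hz => ?_⟩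
      have hw : α z = α zb := hαconst z hz zb hzb
      have h1 : H z = a * α z + c := by
        have h := hz.1
        linear_combination h
      have h2 : P.eval z * F (α zb) = a * α zb + c := by
        rw [← hw, ← hHdef z]
        rw [h1, hw]
      rw [eq_div_iff hFw]
      exact h2
  obtain ⟨t, ht⟩ := hkey
  set Q : Polynomial ℂ := P - Polynomial.C t with hQdef
  have hdegpos : 0 < P.degree := by
    rw [hP]
    exact_mod_cast Nat.pos_of_ne_zero (by omega)
  have hdeg : Q.degree = (n : WithBot ℕ) := by
    rw [hQdef, Polynomial.degree_sub_C hdegpos, hP]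
  have hQne : Q ≠ 0 := by
    intro h
    rw [h, Polynomial.degree_zero] at hdeg
    exact (by simp : (⊥ : WithBot ℕ) ≠ (n : WithBot ℕ)) hdeg
  have hnat : Q.natDegree = n := Polynomial.natDegree_eq_of_degree_eq_some hdeg
  refine ⟨Q.roots.toFinset, ?_, ?_⟩
  · calc Q.roots.toFinset.card ≤ Multiset.card Q.roots := Multiset.toFinset_card_le _
      _ ≤ Q.natDegree := Polynomial.card_roots' Q
      _ = n := hnat
  · intro z hz
    have hz0 : Q.eval z = 0 := by
      rw [hQdef]
      simp [ht z hz]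
    have : z ∈ Q.roots := by
      rw [Polynomial.mem_roots hQne]
      exact hz0
    simpa using this
end

section
/- Let H and α be entire functions such that α′ has at least one zero and H′ and α′ have no common zeros. Then there exists an at most countable set E ⊂ ℂ such that for every a ∈ ℂ \ E, every zero of the function z ↦ H′(z) − a·α′(z) is simple; that is, whenever H′(z) − a·α′(z) = 0 one has H″(z) − a·α″(z) ≠ 0. -/
open Metric Set Filter

/-- Let H and α be entire functions such that α′ has at least one
zero and H′ and α′ have no common zeros. Then there exists an at most countable
set E ⊂ ℂ such that for every a ∉ E, every zero of z ↦ H′(z) − a·α′(z) is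
simple: whenever H′(z) − a·α′(z) = 0 one has H″(z) − a·α″(z) ≠ 0. -/
theorem stmt10 (H α : ℂ → ℂ)
    (hH : Differentiable ℂ H) (hα : Differentiable ℂ α)
    (hzero : ∃ z : ℂ, deriv α z = 0)
    (hno : ∀ z : ℂ, ¬(deriv H z = 0 ∧ deriv α z = 0)) :
    ∃ E : Set ℂ, E.Countable ∧
      ∀ a : ℂ, a ∉ E → ∀ z : ℂ,
        deriv H z - a * deriv α z = 0 →
        deriv (deriv H) z - a * deriv (deriv α) z ≠ 0 := by
  have hHa : AnalyticOnNhd ℂ H univ := hH.differentiableOn.analyticOnNhd isOpen_univ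
  have hαa : AnalyticOnNhd ℂ α univ := hα.differentiableOn.analyticOnNhd isOpen_univ
  have hH'a : AnalyticOnNhd ℂ (deriv H) univ := hHa.deriv
  have hα'a : AnalyticOnNhd ℂ (deriv α) univ := hαa.deriv
  have hH'' : AnalyticOnNhd ℂ (deriv (deriv H)) univ := hH'a.deriv
  have hα'' : AnalyticOnNhd ℂ (deriv (deriv α)) univ := hα'a.deriv
  have hH'd : Differentiable ℂ (deriv H) := fun z => (hH'a z trivial).differentiableAt
  have hα'd : Differentiable ℂ (deriv α) := fun z => (hα'a z trivial).differentiableAt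
  set g : ℂ → ℂ := fun z =>
    deriv (deriv H) z * deriv α z - deriv H z * deriv (deriv α) z with hg_def
  have hga : AnalyticOnNhd ℂ g univ := (hH''.mul hα'a).sub (hH'a.mul hα'')
  by_cases hg0 : ∀ z, g z = 0
  · -- then deriv α ≡ 0, contradiction route
    obtain ⟨z₀, hz₀⟩ := hzero
    have hHz₀ : deriv H z₀ ≠ 0 := fun h => hno z₀ ⟨h, hz₀⟩
    obtain ⟨r, hr, hball⟩ : ∃ r > 0, ∀ z ∈ ball z₀ r, deriv H z ≠ 0 := by
      have : ∀ᶠ z in nhds z₀, deriv H z ≠ 0 :=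
        (hH'd.continuous.continuousAt).eventually_ne hHz₀
      obtain ⟨r, hr, h⟩ := Metric.eventually_nhds_iff_ball.1 this
      exact ⟨r, hr, h⟩
    set φ : ℂ → ℂ := fun z => deriv α z / deriv H z with hφ_def
    have hφd : ∀ z ∈ ball z₀ r, DifferentiableAt ℂ φ z := fun z hz =>
      (hα'd z).div (hH'd z) (hball z hz)
    have hφ' : ∀ z ∈ ball z₀ r, deriv φ z = 0 := by
      intro z hz
      rw [hφ_def, deriv_fun_div (hα'd z) (hH'd z) (hball z hz)]
      have := hg0 z
      rw [hg_def] at this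
      simp only at this
      rw [div_eq_zero_iff]
      left
      linear_combination -this
    have hconst : ∀ z ∈ ball z₀ r, φ z = φ z₀ := by
      intro z hz
      apply (convex_ball z₀ r).is_const_of_fderivWithin_eq_zero
        (fun w hw => (hφd w hw).differentiableWithinAt)
        (fun w hw => ?_) hz (mem_ball_self hr)
      rw [fderivWithin_of_isOpen isOpen_ball hw]
      have := (hφd w hw).hasDerivAt
      rw [hasDerivAt_iff_hasFDerivAt] at this
      rw [this.fderiv, hφ' w hw]
      ext; simp
    have hφz₀ : φ z₀ = 0 := by simp [hφ_def, hz₀]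
    have hα'ball : ∀ z ∈ ball z₀ r, deriv α z = 0 := by
      intro z hz
      have h1 := hconst z hz
      rw [hφz₀, hφ_def] at h1
      exact (div_eq_zero_iff.1 h1).resolve_right (hball z hz)
    have hα'0 : ∀ z : ℂ, deriv α z = 0 := by
      intro z
      have := hα'a.eqOn_zero_of_preconnected_of_eventuallyEq_zero
        isPreconnected_univ (trivial : z₀ ∈ univ)
        (Filter.eventually_of_mem (ball_mem_nhds z₀ hr) hα'ball)
      exact this (mem_univ z)
    refine ⟨∅, countable_empty, fun a _ z hz => ?_⟩
    exfalso
    rw [hα'0 z, mul_zero, sub_zero] at hz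
    exact hno z ⟨hz, hα'0 z⟩
  · push_neg at hg0
    obtain ⟨w, hw⟩ := hg0
    set S : Set ℂ := {z | g z = 0} with hS_def
    have hSd : DiscreteTopology S := by
      rw [discreteTopology_subtype_iff]
      intro x hx
      rcases (hga x trivial).eventually_eq_zero_or_eventually_ne_zero with h | h
      · exact absurd (hga.eqOn_zero_of_preconnected_of_eventuallyEq_zero
          isPreconnected_univ (mem_univ x) h (mem_univ w)) hw
      · rw [← Filter.empty_mem_iff_bot]
        filter_upwards [Filter.mem_inf_of_left h,
          Filter.mem_inf_of_right (Filter.mem_principal_self S)]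
        intro y hy1 hy2
        exact hy1 hy2
    have hSc : S.Countable := (HereditarilyLindelof_LindelofSets S).countable hSd
    refine ⟨(fun z => deriv H z / deriv α z) '' S, hSc.image _, ?_⟩
    intro a ha z hz hz2
    have hαz : deriv α z ≠ 0 := by
      intro h0
      rw [h0, mul_zero, sub_zero] at hz
      exact hno z ⟨hz, h0⟩
    have haz : a = deriv H z / deriv α z := by
      rw [eq_div_iff hαz]
      linear_combination -hz
    have hgz : g z = 0 := by
      rw [hg_def]
      have h1 : deriv H z = a * deriv α z := sub_eq_zero.1 hz
      have h2 : deriv (deriv H) z = a * deriv (deriv α) z := sub_eq_zero.1 hz2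
      simp only
      rw [h1, h2]; ring
    exact ha ⟨z, hgz, haz.symm⟩
end

section
/- Let G be an entire function such that G′ has infinitely many zeros and such that there exists n ∈ ℕ with the property that for every c ∈ ℂ the set {z ∈ ℂ : G(z) = c and G′(z) = 0} has at most n elements. Then G cannot be written as G = f ∘ q, where f is a nonconstant periodic entire function and q is a nonconstant polynomial. -/
/-- Let G be an entire function such that G′ has infinitely many
zeros and such that there exists n ∈ ℕ with: for every c ∈ ℂ the set
{z : G(z) = c and G′(z) = 0} has at most n elements. Then G cannot be written
as G = f ∘ q with f a nonconstant periodic entire function and q a nonconstant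
polynomial. -/
theorem stmt12 (G : ℂ → ℂ) (hG : Differentiable ℂ G)
    (hzeros : Set.Infinite {z : ℂ | deriv G z = 0})
    (hbound : ∃ n : ℕ, ∀ c : ℂ, ∃ s : Finset ℂ, s.card ≤ n ∧
      {z : ℂ | G z = c ∧ deriv G z = 0} ⊆ ↑s) :
    ¬ ∃ (f : ℂ → ℂ) (q : Polynomial ℂ),
        Differentiable ℂ f ∧
        (∃ lam : ℂ, lam ≠ 0 ∧ ∀ z : ℂ, f (z + lam) = f z) ∧
        (¬ ∃ c : ℂ, ∀ z : ℂ, f z = c) ∧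
        0 < q.degree ∧
        (∀ z : ℂ, G z = f (q.eval z)) := by
  rintro ⟨f, q, hf, ⟨lam, hlam, hper⟩, hfnc, hqdeg, hGq⟩
  -- G as a function
  have hGfun : G = fun z => f (q.eval z) := funext hGq
  -- derivative formula
  have hd : ∀ z, deriv G z = deriv f (q.eval z) * q.derivative.eval z := by
    intro z
    rw [hGfun]
    have : (fun z => f (q.eval z)) = f ∘ (fun z => q.eval z) := rfl
    rw [this, deriv_comp z (hf.differentiableAt) (q.differentiable.differentiableAt),
      Polynomial.deriv]
  -- q' ≠ 0
  have hq'ne : q.derivative ≠ 0 := by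
    intro h
    have := Polynomial.natDegree_eq_zero_of_derivative_eq_zero h
    have h2 : q.degree ≤ 0 := Polynomial.natDegree_eq_zero_iff_degree_le_zero.mp this
    exact absurd (lt_of_lt_of_le hqdeg h2) (lt_irrefl _)
  have hq'fin : Set.Finite {z : ℂ | q.derivative.eval z = 0} :=
    Polynomial.finite_setOf_isRoot hq'ne
  -- find z₀ with deriv G z₀ = 0 and q'(z₀) ≠ 0
  obtain ⟨z₀, hz₀⟩ := (hzeros.diff hq'fin).nonempty
  have hGz₀ : deriv G z₀ = 0 := hz₀.1
  have hq'z₀ : q.derivative.eval z₀ ≠ 0 := hz₀.2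
  have hf'w₀ : deriv f (q.eval z₀) = 0 := by
    have := hd z₀
    rw [hGz₀] at this
    rcases mul_eq_zero.mp this.symm with h | h
    · exact h
    · exact absurd h hq'z₀
  set w₀ := q.eval z₀ with hw₀def
  -- periodicity
  have hper' : Function.Periodic f lam := hper
  have hdper : Function.Periodic (deriv f) lam := by
    intro x
    have h1 : (fun y => f (y + lam)) = f := funext hper
    calc deriv f (x + lam) = deriv (fun y => f (y + lam)) x := (deriv_comp_add_const f lam x).symm
      _ = deriv f x := by rw [h1]
  -- surjectivity of q.eval
  have hsurj : ∀ t : ℂ, ∃ z : ℂ, q.eval z = t := by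
    intro t
    have hdeg : 0 < (q - Polynomial.C t).degree := by
      rw [Polynomial.degree_sub_C hqdeg]; exact hqdeg
    obtain ⟨z, hz⟩ := Complex.exists_root hdeg
    refine ⟨z, ?_⟩
    have : Polynomial.eval z (q - Polynomial.C t) = 0 := hz
    simpa [sub_eq_zero] using this
  choose zf hzf using fun k : ℕ => hsurj (w₀ + (k : ℂ) * lam)
  obtain ⟨n, hn⟩ := hbound
  obtain ⟨s, hscard, hssub⟩ := hn (f w₀)
  have hmem : ∀ k : ℕ, zf k ∈ s := by
    intro k
    apply hssub
    constructor
    · rw [hGq, hzf k]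
      exact (hper'.nat_mul k w₀).trans rfl |>.symm ▸ by
        simpa [mul_comm] using (hper'.nat_mul k) w₀
    · rw [hd, hzf k]
      have : deriv f (w₀ + (k : ℂ) * lam) = deriv f w₀ := by
        simpa [mul_comm] using (hdper.nat_mul k) w₀
      rw [this, hf'w₀, zero_mul]
  have hinj : Function.Injective zf := by
    intro a b hab
    have : w₀ + (a : ℂ) * lam = w₀ + (b : ℂ) * lam := by rw [← hzf a, ← hzf b, hab]
    have h2 : (a : ℂ) = b := by
      rw [add_right_inj, mul_eq_mul_right_iff] at this
      rcases this with h | h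
      · exact_mod_cast h
      · exact absurd h hlam
    exact_mod_cast h2
  have : (Finset.range (n + 1)).card ≤ s.card := by
    apply Finset.card_le_card_of_injOn zf (fun k _ => hmem k) (hinj.injOn)
  simp [Finset.card_range] at this
  omega
end
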